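/- Let L be the normalized transfer operator (L1 = 1) for a Hölder potential φ on a mixing subshift of finite type, with Gibbs measure μ. There exists c > 0 such that for every k ≥ 1 and w ∈ B_θ, |L^k w|_θ ≤ c(θ^k |w|_θ + ‖w‖_{L¹(μ)}). -/

import Mathlib

open MeasureTheory Filter ENNReal

noncomputable section

/-- The left shift on one-sided sequences. -/
def shiftSeq {α : Type*} : (ℕ → α) → ℕ → α := fun x n => x (n + 1)

/-- The cylinder of length `n` centred at `x`. -/
def cyl {α : Type*} (x : ℕ → α) (n : ℕ) : Set (ℕ → α) := {y | ∀ i < n, y i = x i}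

/-- `osc(w, m, x)`: the essential supremum of `|w(y) − w(z)|` over `y, z` in the
cylinder `[x]_m` (with respect to `μ`). -/
def oscE {α : Type*} [MeasurableSpace α] (μ : Measure (ℕ → α))
    (w : (ℕ → α) → ℝ) (m : ℕ) (x : ℕ → α) : ℝ≥0∞ :=
  essSup (fun p : (ℕ → α) × (ℕ → α) => ENNReal.ofReal |w p.1 - w p.2|)
    ((μ.restrict (cyl x m)).prod (μ.restrict (cyl x m)))

/-- The seminorm `|w|_θ = sup_{m ≥ 1} θ^{-m} ∫ osc(w, m, ·) dμ`. -/
def thetaSemi {α : Type*} [MeasurableSpace α] (μ : Measure (ℕ → α)) (θ : ℝ)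
    (w : (ℕ → α) → ℝ) : ℝ≥0∞ :=
  ⨆ m : ℕ, ⨆ _ : 1 ≤ m, (ENNReal.ofReal θ ^ m)⁻¹ * ∫⁻ x, oscE μ w m x ∂μ

/-- The norm `‖w‖_θ = |w|_θ + ‖w‖_{L¹(μ)}`. -/
def thetaNorm {α : Type*} [MeasurableSpace α] (μ : Measure (ℕ → α)) (θ : ℝ)
    (w : (ℕ → α) → ℝ) : ℝ≥0∞ :=
  thetaSemi μ θ w + ∫⁻ x, ENNReal.ofReal |w x| ∂μ


/-- The Birkhoff sum `φⁿ(x)`. -/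
def birk {α : Type*} (φ : (ℕ → α) → ℝ) (n : ℕ) (x : ℕ → α) : ℝ :=
  ∑ i ∈ Finset.range n, φ (shiftSeq^[i] x)

/-- Prepend a symbol to a sequence. -/
def prepend {α : Type*} (a : α) (x : ℕ → α) : ℕ → α :=
  fun n => match n with
  | 0 => a
  | k + 1 => x k

/-- The transfer operator `(Lw)(x) = Σ_{σ y = x} e^{φ(y)} w(y)` of the subshift of finite
type given by the 0-1 matrix `A`. -/
def transfer {l : ℕ} (A : Fin l → Fin l → Bool) (φ : (ℕ → Fin l) → ℝ)
    (w : (ℕ → Fin l) → ℝ) (x : ℕ → Fin l) : ℝ :=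
  ∑ a : Fin l,
    if A a (x 0) then Real.exp (φ (prepend a x)) * w (prepend a x) else 0

namespace LY

variable {l : ℕ}

/-- extend a sequence by a word of length `k`. -/
def ext {k : ℕ} (u : Fin k → Fin l) (y : ℕ → Fin l) : ℕ → Fin l :=
  fun n => if h : n < k then u ⟨n, h⟩ else y (n - k)

lemma ext_apply_lt {k : ℕ} (u : Fin k → Fin l) (y : ℕ → Fin l) {n : ℕ} (h : n < k) :
    ext u y n = u ⟨n, h⟩ := dif_pos h

lemma ext_apply_ge {k : ℕ} (u : Fin k → Fin l) (y : ℕ → Fin l) {n : ℕ} (h : k ≤ n) :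
    ext u y n = y (n - k) := dif_neg (by omega)

lemma shiftSeq_iterate_apply (x : ℕ → Fin l) (i n : ℕ) : shiftSeq^[i] x n = x (n + i) := by
  induction i generalizing x n with
  | zero => rfl
  | succ i ih =>
    rw [Function.iterate_succ_apply, ih]
    simp [shiftSeq]; ring_nf

lemma shiftSeq_iterate_ext {k : ℕ} (u : Fin k → Fin l) (y : ℕ → Fin l) :
    shiftSeq^[k] (ext u y) = y := by
  funext n
  rw [shiftSeq_iterate_apply, ext_apply_ge _ _ (by omega)]
  congr 1; omega

lemma shiftSeq_ext_succ {k : ℕ} (a : Fin l) (u : Fin k → Fin l) (y : ℕ → Fin l) :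
    shiftSeq (ext (Fin.cons a u) y) = ext u y := by
  funext n
  by_cases h : n < k
  · rw [shiftSeq, ext_apply_lt _ _ (show n + 1 < k + 1 by omega), ext_apply_lt _ _ h]
    simp [Fin.cons]
  · rw [shiftSeq, ext_apply_ge _ _ (by omega : k + 1 ≤ n + 1), ext_apply_ge _ _ (by omega : k ≤ n)]
    congr 1; omega

lemma prepend_ext {k : ℕ} (a : Fin l) (u : Fin k → Fin l) (y : ℕ → Fin l) :
    prepend a (ext u y) = ext (Fin.cons a u) y := by
  funext n
  cases n with
  | zero => rw [ext_apply_lt _ _ (by omega : 0 < k + 1)]; rfl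
  | succ n =>
    show ext u y n = ext (Fin.cons a u) y (n+1)
    by_cases h : n < k
    · rw [ext_apply_lt _ _ h, ext_apply_lt _ _ (show n + 1 < k + 1 by omega)]
      simp [Fin.cons]
    · rw [ext_apply_ge _ _ (by omega : k ≤ n), ext_apply_ge _ _ (by omega : k + 1 ≤ n + 1)]
      congr 1; omega

lemma ext_zero (u : Fin 0 → Fin l) (y : ℕ → Fin l) : ext u y = y := by
  funext n; rw [ext_apply_ge _ _ (by omega)]; congr 1

/-- admissibility of the word `u` prepended to `y` (includes the junction). -/
def adm (A : Fin l → Fin l → Bool) {k : ℕ} (u : Fin k → Fin l) (y : ℕ → Fin l) : Prop :=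
  ∀ i, i < k → A (ext u y i) (ext u y (i + 1)) = true

instance (A : Fin l → Fin l → Bool) (k : ℕ) (u : Fin k → Fin l) (y : ℕ → Fin l) :
    Decidable (adm A u y) := by unfold adm; infer_instance

lemma adm_congr (A : Fin l → Fin l → Bool) {k : ℕ} (u : Fin k → Fin l) {y z : ℕ → Fin l}
    (h0 : y 0 = z 0) : adm A u y ↔ adm A u z := by
  have key3 : ∀ i, i ≤ k → ext u y i = ext u z i := by
    intro i hi
    rcases lt_or_eq_of_le hi with hi | hi
    · rw [ext_apply_lt _ _ hi, ext_apply_lt _ _ hi]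
    · subst hi
      rw [ext_apply_ge _ _ le_rfl, ext_apply_ge _ _ le_rfl, Nat.sub_self]
      exact h0
  unfold adm
  constructor <;> intro h i hi
  · rw [← key3 i (by omega), ← key3 (i+1) (by omega)]; exact h i hi
  · rw [key3 i (by omega), key3 (i+1) (by omega)]; exact h i hi

lemma birk_succ_ext {k : ℕ} (φ : (ℕ → Fin l) → ℝ) (a : Fin l) (u : Fin k → Fin l)
    (y : ℕ → Fin l) :
    birk φ (k + 1) (ext (Fin.cons a u) y)
      = φ (ext (Fin.cons a u) y) + birk φ k (ext u y) := by
  unfold birk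
  rw [Finset.sum_range_succ']
  rw [add_comm]
  congr 1
  apply Finset.sum_congr rfl
  intro i _
  rw [Function.iterate_succ_apply, shiftSeq_ext_succ]

/-- The iterate formula. -/
lemma transfer_iterate (A : Fin l → Fin l → Bool) (φ : (ℕ → Fin l) → ℝ)
    (w : (ℕ → Fin l) → ℝ) (k : ℕ) (x : ℕ → Fin l) :
    (transfer A φ)^[k] w x
      = ∑ u : Fin k → Fin l,
          if adm A u x then Real.exp (birk φ k (ext u x)) * w (ext u x) else 0 := by
  induction k generalizing w with
  | zero =>
    simp only [Function.iterate_zero, id_eq]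
    rw [Fintype.sum_eq_single (fun (i : Fin 0) => i.elim0) (by intro u hu; exact absurd (funext fun i => i.elim0) hu)]
    rw [if_pos (by intro i hi; omega)]
    rw [ext_zero]
    simp [birk]
  | succ k ih =>
    rw [Function.iterate_succ_apply, ih (transfer A φ w)]
    -- expand transfer at each ext u x
    have expand : ∀ u : Fin k → Fin l,
        (if adm A u x then Real.exp (birk φ k (ext u x)) * transfer A φ w (ext u x) else 0)
        = ∑ a : Fin l, (if adm A (Fin.cons a u) x
            then Real.exp (birk φ (k+1) (ext (Fin.cons a u) x)) * w (ext (Fin.cons a u) x) else 0) := by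
      intro u
      by_cases h : adm A u x
      · rw [if_pos h]
        rw [transfer, Finset.mul_sum]
        apply Finset.sum_congr rfl
        intro a _
        rw [← prepend_ext]
        have hadm : adm A (Fin.cons a u) x ↔ (A a (ext u x 0) = true ∧ adm A u x) := by
          constructor
          · intro hh
            constructor
            · have := hh 0 (by omega)
              rw [ext_apply_lt _ _ (by omega : (0:ℕ) < k+1)] at this
              have h1 : ext (Fin.cons a u) x 1 = ext u x 0 := by
                rw [← shiftSeq_ext_succ a u x]; rfl
              rw [h1] at this
              simpa using this
            · exact h
          · intro ⟨h1, h2⟩ i hi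
            have hs : ∀ j, ext (Fin.cons a u) x (j+1) = ext u x j := by
              intro j; rw [← shiftSeq_ext_succ a u x]; rfl
            cases i with
            | zero =>
              rw [ext_apply_lt _ _ (by omega : (0:ℕ) < k+1), hs 0]
              simpa using h1
            | succ i =>
              rw [hs i, hs (i+1)]
              exact h2 i (by omega)
        by_cases ha : A a (ext u x 0) = true
        · rw [if_pos ha, if_pos (hadm.mpr ⟨ha, h⟩), prepend_ext, birk_succ_ext,
            Real.exp_add, ← prepend_ext]
          ring
        · rw [if_neg ha, if_neg (fun hh => ha (hadm.mp hh).1)]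
          ring
      · rw [if_neg h]
        symm
        apply Finset.sum_eq_zero
        intro a _
        rw [if_neg]
        intro hh
        apply h
        intro i hi
        have hs : ∀ j, ext (Fin.cons a u) x (j+1) = ext u x j := by
          intro j; rw [← shiftSeq_ext_succ a u x]; rfl
        have := hh (i+1) (by omega)
        rwa [hs i, hs (i+1)] at this
    calc (∑ u : Fin k → Fin l,
        if adm A u x then Real.exp (birk φ k (ext u x)) * transfer A φ w (ext u x) else 0)
        = ∑ u : Fin k → Fin l, ∑ a : Fin l,
            (if adm A (Fin.cons a u) x
            then Real.exp (birk φ (k+1) (ext (Fin.cons a u) x)) * w (ext (Fin.cons a u) x) else 0) := by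
          exact Finset.sum_congr rfl fun u _ => expand u
      _ = ∑ v : Fin (k+1) → Fin l,
            if adm A v x then Real.exp (birk φ (k+1) (ext v x)) * w (ext v x) else 0 := by
          have h1 : (∑ v : Fin (k+1) → Fin l,
                (if adm A v x then Real.exp (birk φ (k+1) (ext v x)) * w (ext v x) else 0))
              = ∑ p : Fin l × (Fin k → Fin l),
                (if adm A (Fin.cons p.1 p.2) x
                  then Real.exp (birk φ (k+1) (ext (Fin.cons p.1 p.2) x)) * w (ext (Fin.cons p.1 p.2) x) else 0) := by
            apply Fintype.sum_equiv (Fin.consEquiv (fun _ => Fin l)).symm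
            intro v
            have hv : Fin.cons ((Fin.consEquiv (fun _ => Fin l)).symm v).1
                ((Fin.consEquiv (fun _ => Fin l)).symm v).2 = v := by
              funext i
              cases i using Fin.cases <;> rfl
            rw [hv]
          rw [h1, Fintype.sum_prod_type]
          exact Finset.sum_comm

end LY

namespace Chunk2
variable {l : ℕ}
open LY

lemma mem_cyl_iff {x y : ℕ → Fin l} {n : ℕ} : y ∈ cyl x n ↔ ∀ i < n, y i = x i := Iff.rfl

lemma self_mem_cyl (x : ℕ → Fin l) (n : ℕ) : x ∈ cyl x n := fun _ _ => rfl

lemma cyl_eq_of_mem {x y : ℕ → Fin l} {n : ℕ} (h : y ∈ cyl x n) : cyl y n = cyl x n := by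
  ext z
  constructor <;> intro hz i hi
  · rw [hz i hi, h i hi]
  · rw [hz i hi, ← h i hi]

lemma cyl_antitone {x : ℕ → Fin l} {m n : ℕ} (h : m ≤ n) : cyl x n ⊆ cyl x m :=
  fun _ hz i hi => hz i (lt_of_lt_of_le hi h)

lemma cyl_inter_of_le {p q : ℕ → Fin l} {N M : ℕ} (h : N ≤ M)
    (hne : (cyl p N ∩ cyl q M).Nonempty) : cyl q M ⊆ cyl p N := by
  obtain ⟨r, hr1, hr2⟩ := hne
  intro z hz i hi
  rw [hz i (lt_of_lt_of_le hi h), ← hr2 i (lt_of_lt_of_le hi h), hr1 i hi]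

lemma measurableSet_cyl (x : ℕ → Fin l) (n : ℕ) : MeasurableSet (cyl x n) := by
  have : cyl x n = ⋂ i ∈ Finset.range n, (fun y : ℕ → Fin l => y i) ⁻¹' {x i} := by
    ext z; simp [cyl, Set.mem_iInter]
  rw [this]
  exact MeasurableSet.biInter (Set.to_countable _)
    (fun i _ => (measurable_pi_apply i) (MeasurableSet.singleton _))

lemma isOpen_cyl (x : ℕ → Fin l) (n : ℕ) : IsOpen (cyl x n) := by
  have : cyl x n = ⋂ i ∈ Finset.range n, (fun y : ℕ → Fin l => y i) ⁻¹' {x i} := by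
    ext z; simp [cyl, Set.mem_iInter]
  rw [this]
  exact Set.Finite.isOpen_biInter (Finset.finite_toSet _)
    (fun i _ => (continuous_apply i).isOpen_preimage _ (isOpen_discrete _))

lemma exists_cyl_subset_of_isOpen {U : Set (ℕ → Fin l)} (hU : IsOpen U) {y : ℕ → Fin l}
    (hy : y ∈ U) : ∃ N, cyl y N ⊆ U := by
  rcases isOpen_pi_iff.mp hU y hy with ⟨I, u, hu, hsub⟩
  refine ⟨I.sup id + 1, fun z hz => hsub ?_⟩
  intro i hi
  have : z i = y i := hz i (by
    have : i ≤ I.sup id := Finset.le_sup (f := id) hi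
    omega)
  rw [this]
  exact (hu i hi).2

lemma measurable_ext {k : ℕ} (u : Fin k → Fin l) : Measurable (ext u (l := l)) := by
  apply measurable_pi_lambda
  intro n
  unfold ext
  by_cases h : n < k
  · simp only [dif_pos h]; exact measurable_const
  · simp only [dif_neg h]; exact measurable_pi_apply _

lemma ext_mem_cyl {k m : ℕ} (u : Fin k → Fin l) {x y : ℕ → Fin l} (h : y ∈ cyl x m) :
    ext u y ∈ cyl (ext u x) (m + k) := by
  intro i hi
  by_cases hik : i < k
  · rw [ext_apply_lt _ _ hik, ext_apply_lt _ _ hik]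
  · rw [ext_apply_ge _ _ (by omega), ext_apply_ge _ _ (by omega)]
    exact h _ (by omega)

end Chunk2

section RealEst

lemma geom_tail_le {θ : ℝ} (hθ : 0 < θ) (hθ1 : θ < 1) (k : ℕ) :
    ∑ i ∈ Finset.range k, θ ^ (k - i) ≤ θ / (1 - θ) := by
  have h1 : ∑ i ∈ Finset.range k, θ ^ (k - i) = ∑ j ∈ Finset.range k, θ ^ (j + 1) := by
    rw [← Finset.sum_range_reflect]
    apply Finset.sum_congr rfl
    intro j hj
    simp only [Finset.mem_range] at hj
    congr 1
    omega
  rw [h1]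
  have h2 : ∑ j ∈ Finset.range k, θ ^ (j + 1) = θ * ∑ j ∈ Finset.range k, θ ^ j := by
    rw [Finset.mul_sum]
    apply Finset.sum_congr rfl
    intro j _
    rw [pow_succ]; ring
  rw [h2, div_eq_mul_inv]
  apply mul_le_mul_of_nonneg_left _ hθ.le
  have h4 : (0:ℝ) < 1 - θ := by linarith
  have h3 : (∑ j ∈ Finset.range k, θ ^ j) * (1 - θ) = 1 - θ ^ k := by
    have hg := geom_sum_mul θ k
    nlinarith [hg]
  have h5 : (∑ j ∈ Finset.range k, θ ^ j) * (1 - θ) ≤ (1 - θ)⁻¹ * (1 - θ) := by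
    rw [h3, inv_mul_cancel₀ h4.ne']
    nlinarith [pow_pos hθ k]
  exact le_of_mul_le_mul_right h5 h4

lemma abs_exp_sub_exp_le {s t δ : ℝ} (h : |s - t| ≤ δ) :
    |Real.exp s - Real.exp t| ≤ δ * Real.exp δ * Real.exp t := by
  have hδ : 0 ≤ δ := le_trans (abs_nonneg _) h
  have key : ∀ x : ℝ, |x| ≤ δ → |Real.exp x - 1| ≤ δ * Real.exp δ := by
    intro x hx
    rcases le_or_gt 0 x with hx0 | hx0
    · rw [abs_of_nonneg (by nlinarith [Real.one_le_exp hx0])]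
      have h1 : Real.exp x ≤ Real.exp δ := Real.exp_le_exp.mpr (le_trans (le_abs_self x) hx)
      have h2 : Real.exp δ - 1 ≤ δ * Real.exp δ := by
        have := Real.add_one_le_exp (-δ)
        have hpos := Real.exp_pos δ
        have hmul : (1 - δ) * Real.exp δ ≤ Real.exp (-δ) * Real.exp δ := by
          apply mul_le_mul_of_nonneg_right _ hpos.le
          linarith
        rw [← Real.exp_add] at hmul
        simp at hmul
        nlinarith
      linarith
    · rw [abs_of_nonpos (by nlinarith [Real.exp_lt_one_iff.mpr hx0])]
      have h1 : 1 - δ ≤ Real.exp x := by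
        have := Real.add_one_le_exp x
        have : -δ ≤ x := by
          have := neg_abs_le x
          linarith [le_trans (neg_le_neg hx) (neg_abs_le x)]
        nlinarith [Real.add_one_le_exp x]
      have h2 : δ ≤ δ * Real.exp δ := le_mul_of_one_le_right hδ (Real.one_le_exp hδ)
      linarith
  have : Real.exp s - Real.exp t = (Real.exp (s - t) - 1) * Real.exp t := by
    rw [sub_mul, ← Real.exp_add]; ring_nf
  rw [this, abs_mul, abs_of_pos (Real.exp_pos t)]
  have := key (s - t) h
  nlinarith [Real.exp_pos t, abs_nonneg (Real.exp (s-t) - 1)]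

lemma exp_le_exp_mul_of_abs_sub {s t δ : ℝ} (h : |s - t| ≤ δ) :
    Real.exp s ≤ Real.exp δ * Real.exp t := by
  rw [← Real.exp_add]
  apply Real.exp_le_exp.mpr
  have := le_of_abs_le h
  linarith [le_of_abs_le h]

end RealEst

namespace Chunk3
open LY Chunk2

variable {l : ℕ} {θ Kφ : ℝ} {φ : (ℕ → Fin l) → ℝ}

lemma Kφ_nonneg (hφ : ∀ x y : ℕ → Fin l, ∀ n : ℕ, (∀ i < n, x i = y i) → |φ x - φ y| ≤ Kφ * θ ^ n)
    (z : ℕ → Fin l) : 0 ≤ Kφ := by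
  have := hφ z z 0 (by omega)
  simpa using this

lemma birk_abs_sub_le (hθ : 0 < θ) (hθ1 : θ < 1)
    (hφ : ∀ x y : ℕ → Fin l, ∀ n : ℕ, (∀ i < n, x i = y i) → |φ x - φ y| ≤ Kφ * θ ^ n)
    {p q : ℕ → Fin l} {n k : ℕ} (hk : k ≤ n) (hagree : ∀ i < n, p i = q i) :
    |birk φ k p - birk φ k q| ≤ (Kφ * (θ / (1 - θ))) * θ ^ (n - k) := by
  have hKφ : 0 ≤ Kφ := Kφ_nonneg hφ p
  have h1 : |birk φ k p - birk φ k q|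
      ≤ ∑ i ∈ Finset.range k, |φ (shiftSeq^[i] p) - φ (shiftSeq^[i] q)| := by
    unfold birk
    rw [← Finset.sum_sub_distrib]
    exact Finset.abs_sum_le_sum_abs _ _
  have h2 : ∀ i ∈ Finset.range k, |φ (shiftSeq^[i] p) - φ (shiftSeq^[i] q)| ≤ Kφ * θ ^ (n - i) := by
    intro i hi
    simp only [Finset.mem_range] at hi
    apply hφ
    intro j hj
    rw [shiftSeq_iterate_apply, shiftSeq_iterate_apply]
    exact hagree _ (by omega)
  have h3 : ∑ i ∈ Finset.range k, Kφ * θ ^ (n - i)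
      = Kφ * θ ^ (n - k) * ∑ i ∈ Finset.range k, θ ^ (k - i) := by
    rw [Finset.mul_sum]
    apply Finset.sum_congr rfl
    intro i hi
    simp only [Finset.mem_range] at hi
    rw [mul_assoc, ← pow_add]
    congr 2
    omega
  have h4 := geom_tail_le hθ hθ1 k
  calc |birk φ k p - birk φ k q| ≤ ∑ i ∈ Finset.range k, Kφ * θ ^ (n - i) :=
        le_trans h1 (Finset.sum_le_sum h2)
    _ = Kφ * θ ^ (n - k) * ∑ i ∈ Finset.range k, θ ^ (k - i) := h3
    _ ≤ Kφ * θ ^ (n - k) * (θ / (1 - θ)) := by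
        apply mul_le_mul_of_nonneg_left h4 (by positivity)
    _ = (Kφ * (θ / (1 - θ))) * θ ^ (n - k) := by ring

lemma measurable_phi (hθ : 0 < θ) (hθ1 : θ < 1) [Nonempty (Fin l)]
    (hφ : ∀ x y : ℕ → Fin l, ∀ n : ℕ, (∀ i < n, x i = y i) → |φ x - φ y| ≤ Kφ * θ ^ n) :
    Measurable φ := by
  have hKφ : 0 ≤ Kφ := Kφ_nonneg hφ (fun _ => Classical.arbitrary _)
  set z0 : ℕ → Fin l := fun _ => Classical.arbitrary _ with hz0
  set f : ℕ → (ℕ → Fin l) → ℝ := fun n x => φ (ext (fun i : Fin n => x i) z0) with hf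
  have hmeas : ∀ n, Measurable (f n) := by
    intro n
    have : f n = (fun v : Fin n → Fin l => φ (ext v z0)) ∘ (fun x (i : Fin n) => x (i : ℕ)) := rfl
    rw [this]
    have hr : Measurable (fun (x : ℕ → Fin l) (i : Fin n) => x (i : ℕ)) :=
      measurable_pi_lambda _ (fun i => measurable_pi_apply _)
    exact (measurable_of_countable _).comp hr
  apply measurable_of_tendsto_metrizable hmeas
  rw [tendsto_pi_nhds]
  intro x
  apply tendsto_iff_dist_tendsto_zero.mpr
  have hb : ∀ n, dist (f n x) (φ x) ≤ Kφ * θ ^ n := by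
    intro n
    rw [Real.dist_eq]
    apply hφ
    intro i hi
    exact ext_apply_lt _ _ hi
  apply squeeze_zero (fun n => dist_nonneg) hb
  rw [show (0:ℝ) = Kφ * 0 by ring]
  exact (tendsto_pow_atTop_nhds_zero_of_lt_one hθ.le hθ1).const_mul Kφ

lemma measurableSet_adm (A : Fin l → Fin l → Bool) {k : ℕ} (u : Fin k → Fin l) :
    MeasurableSet {x : ℕ → Fin l | adm A u x} := by
  have : {x : ℕ → Fin l | adm A u x}
      = ⋂ i ∈ Finset.range k, {x : ℕ → Fin l | A (ext u x i) (ext u x (i+1)) = true} := by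
    ext x; simp [adm, Set.mem_iInter]
  rw [this]
  apply MeasurableSet.biInter (Set.to_countable _)
  intro i _
  have hm : Measurable (fun x : ℕ → Fin l => (ext u x i, ext u x (i+1))) := by
    apply Measurable.prod
    · exact (measurable_pi_apply i).comp (measurable_ext u)
    · exact (measurable_pi_apply (i+1)).comp (measurable_ext u)
  exact hm ((measurable_of_countable (fun p : Fin l × Fin l => A p.1 p.2)) (MeasurableSet.singleton true))

lemma measurable_birk (hmφ : Measurable φ) (k : ℕ) : Measurable (birk φ k) := by
  unfold birk
  apply Finset.measurable_sum
  intro i _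
  apply hmφ.comp
  apply measurable_pi_lambda
  intro n
  simp only [shiftSeq_iterate_apply]
  exact measurable_pi_apply _

lemma measurable_transfer_iterate (A : Fin l → Fin l → Bool) (hmφ : Measurable φ)
    {w : (ℕ → Fin l) → ℝ} (hw : Measurable w) (k : ℕ) :
    Measurable ((transfer A φ)^[k] w) := by
  have : (transfer A φ)^[k] w = fun x => ∑ u : Fin k → Fin l,
      if adm A u x then Real.exp (birk φ k (ext u x)) * w (ext u x) else 0 := by
    funext x; exact transfer_iterate A φ w k x
  rw [this]
  apply Finset.measurable_sum
  intro u _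
  apply Measurable.ite (measurableSet_adm A u)
  · exact (((measurable_birk hmφ k).comp (measurable_ext u)).exp).mul (hw.comp (measurable_ext u))
  · exact measurable_const
end Chunk3

namespace Chunk4
open LY Chunk2 MeasureTheory

variable {l : ℕ} [Nonempty (Fin l)]

/-- a default point. -/
def z0 (l : ℕ) [Nonempty (Fin l)] : ℕ → Fin l := fun _ => Classical.arbitrary _

/-- The set of points whose length-`N` cylinder is inside `U`. -/
def core (U : Set (ℕ → Fin l)) (N : ℕ) : Set (ℕ → Fin l) := {y | cyl y N ⊆ U}

def coreIdx (U : Set (ℕ → Fin l)) (N : ℕ) : Type _ :=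
  {v : Fin N → Fin l // cyl (ext v (z0 l)) N ⊆ U}

instance (U : Set (ℕ → Fin l)) (N : ℕ) : Countable (coreIdx U N) := by
  unfold coreIdx; infer_instance

lemma core_eq_iUnion (U : Set (ℕ → Fin l)) (N : ℕ) :
    core U N = ⋃ i : coreIdx U N, cyl (ext i.1 (z0 l)) N := by
  ext y
  simp only [core, Set.mem_setOf_eq, Set.mem_iUnion]
  constructor
  · intro hy
    have hmem : y ∈ cyl (ext (fun i : Fin N => y i) (z0 l)) N := by
      intro i hi
      rw [ext_apply_lt _ _ hi]
    refine ⟨⟨fun i => y i, ?_⟩, hmem⟩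
    rw [← cyl_eq_of_mem hmem]
    exact hy
  · rintro ⟨i, hmem⟩
    intro z hz
    rw [cyl_eq_of_mem hmem] at hz
    exact i.2 hz

lemma core_disjoint (U : Set (ℕ → Fin l)) (N : ℕ) :
    Pairwise (Function.onFun Disjoint
      (fun i : coreIdx U N => cyl (ext i.1 (z0 l)) N)) := by
  intro i j hij
  apply Set.disjoint_left.mpr
  intro y hy hy'
  apply hij
  apply Subtype.ext
  funext n
  have h1 := hy n n.isLt
  have h2 := hy' n n.isLt
  rw [ext_apply_lt _ _ n.isLt] at h1
  rw [ext_apply_lt _ _ n.isLt] at h2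
  rw [← h1, ← h2]

lemma measurableSet_core (U : Set (ℕ → Fin l)) (N : ℕ) : MeasurableSet (core U N) := by
  rw [core_eq_iUnion]
  exact MeasurableSet.iUnion (fun i => measurableSet_cyl _ _)

lemma core_mono (U : Set (ℕ → Fin l)) (N : ℕ) : core U N ⊆ core U (N + 1) :=
  fun _ hy => (cyl_antitone (by omega)).trans hy

lemma iUnion_core (U : Set (ℕ → Fin l)) (hU : IsOpen U) : ⋃ N, core U N = U := by
  apply Set.Subset.antisymm
  · intro y hy
    rcases Set.mem_iUnion.mp hy with ⟨N, hN⟩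
    exact hN (self_mem_cyl y N)
  · intro y hy
    rcases exists_cyl_subset_of_isOpen hU hy with ⟨N, hN⟩
    exact Set.mem_iUnion.mpr ⟨N, hN⟩

lemma measure_le_of_forall_cyl_le {ν ρ : Measure (ℕ → Fin l)} [IsFiniteMeasure ρ]
    [ρ.OuterRegular] (h : ∀ (y : ℕ → Fin l) (N : ℕ), ν (cyl y N) ≤ ρ (cyl y N))
    {S : Set (ℕ → Fin l)} (hS : MeasurableSet S) : ν S ≤ ρ S := by
  -- first, for open sets
  have hopen : ∀ U : Set (ℕ → Fin l), IsOpen U → ν U ≤ ρ U := by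
    intro U hU
    have hcore : ∀ N, ν (core U N) ≤ ρ (core U N) := by
      intro N
      rw [core_eq_iUnion]
      rw [measure_iUnion (core_disjoint U N) (fun i => measurableSet_cyl _ _),
        measure_iUnion (core_disjoint U N) (fun i => measurableSet_cyl _ _)]
      exact ENNReal.tsum_le_tsum (fun i => h _ _)
    calc ν U = ν (⋃ N, core U N) := by rw [iUnion_core U hU]
      _ = ⨆ N, ν (core U N) := Directed.measure_iUnion
          (Monotone.directed_le (monotone_nat_of_le_succ (core_mono U)))
      _ ≤ ⨆ N, ρ (core U N) := iSup_mono hcore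
      _ ≤ ρ U := by
          apply iSup_le
          intro N
          apply measure_mono
          intro y hy
          exact hy (self_mem_cyl y N)
  -- general S via outer regularity
  apply ENNReal.le_of_forall_pos_le_add
  intro ε hε hfin
  obtain ⟨U, hSU, hUopen, hUlt⟩ := Set.exists_isOpen_lt_of_lt S (ρ S + ε)
    (by
      apply ENNReal.lt_add_right (ne_of_lt hfin)
      simpa using (ENNReal.coe_pos.mpr hε).ne')
  calc ν S ≤ ν U := measure_mono hSU
    _ ≤ ρ U := hopen U hUopen
    _ ≤ ρ S + ε := le_of_lt hUlt

end Chunk4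

namespace Chunk5
open LY Chunk2 Chunk3 Chunk4 MeasureTheory

variable {l : ℕ} [Nonempty (Fin l)] {A : Fin l → Fin l → Bool} {θ Kφ c0 : ℝ}
  {φ : (ℕ → Fin l) → ℝ} {μ : Measure (ℕ → Fin l)}

/-- the set of admissible sequences -/
def Adm (A : Fin l → Fin l → Bool) : Set (ℕ → Fin l) := {x | ∀ n, A (x n) (x (n + 1)) = true}

lemma measurableSet_Adm : MeasurableSet (Adm A) := by
  have : Adm A = ⋂ n : ℕ, {x : ℕ → Fin l | A (x n) (x (n+1)) = true} := by
    ext x; simp [Adm, Set.mem_iInter]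
  rw [this]
  apply MeasurableSet.iInter
  intro n
  have hm : Measurable (fun x : ℕ → Fin l => (x n, x (n+1))) :=
    (measurable_pi_apply n).prodMk (measurable_pi_apply (n+1))
  exact hm ((measurable_of_countable (fun p : Fin l × Fin l => A p.1 p.2))
    (MeasurableSet.singleton true))

lemma compl_Adm_null [IsProbabilityMeasure μ] (hsupp : μ (Adm A) = 1) : μ (Adm A)ᶜ = 0 := by
  rw [measure_compl measurableSet_Adm (by simp), hsupp]
  simp

lemma exists_adm_of_pos [IsProbabilityMeasure μ] (hsupp : μ (Adm A) = 1)
    {S : Set (ℕ → Fin l)} (hS : μ S ≠ 0) : ∃ p ∈ S, p ∈ Adm A := by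
  have h1 : μ (S ∩ Adm A) ≠ 0 := by
    intro h
    apply hS
    have : μ S ≤ μ (S ∩ Adm A) + μ (Adm A)ᶜ := by
      apply (measure_mono (by
        intro z hz
        by_cases hz2 : z ∈ Adm A
        · exact Set.mem_union_left _ ⟨hz, hz2⟩
        · exact Set.mem_union_right _ hz2)).trans (measure_union_le _ _)
    rw [h, compl_Adm_null hsupp] at this
    simpa using this
  obtain ⟨p, hp⟩ := nonempty_of_measure_ne_zero h1
  exact ⟨p, hp.1, hp.2⟩

lemma adm_ext_mem {k : ℕ} {u : Fin k → Fin l} {p : ℕ → Fin l}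
    (hp : p ∈ Adm A) (hu : adm A u p) : ext u p ∈ Adm A := by
  intro n
  by_cases hn : n < k
  · exact hu n hn
  · rw [ext_apply_ge _ _ (by omega), ext_apply_ge _ _ (by omega : k ≤ n + 1)]
    have : n + 1 - k = (n - k) + 1 := by omega
    rw [this]
    exact hp (n - k)

lemma birk_add (φ : (ℕ → Fin l) → ℝ) (a b : ℕ) (p : ℕ → Fin l) :
    birk φ (a + b) p = birk φ a p + birk φ b (shiftSeq^[a] p) := by
  unfold birk
  rw [Finset.sum_range_add]
  congr 1
  apply Finset.sum_congr rfl
  intro i _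
  have h1 : shiftSeq^[a + i] p = shiftSeq^[i] (shiftSeq^[a] p) := by
    funext n
    rw [shiftSeq_iterate_apply, shiftSeq_iterate_apply, shiftSeq_iterate_apply]
    congr 1
    omega
  rw [h1]

/-- The key cylinder-by-cylinder comparison. -/
lemma cyl_compare [IsProbabilityMeasure μ]
    (hθ : 0 < θ) (hθ1 : θ < 1)
    (hφ : ∀ x y : ℕ → Fin l, ∀ n : ℕ, (∀ i < n, x i = y i) → |φ x - φ y| ≤ Kφ * θ ^ n)
    (hsupp : μ (Adm A) = 1) (hc0 : 1 < c0)
    (hGibbs : ∀ x : ℕ → Fin l, (∀ n, A (x n) (x (n + 1)) = true) → ∀ n : ℕ, 1 ≤ n →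
      ENNReal.ofReal (c0⁻¹ * Real.exp (birk φ n x)) ≤ μ (cyl x n) ∧
      μ (cyl x n) ≤ ENNReal.ofReal (c0 * Real.exp (birk φ n x)))
    {k m : ℕ} (hm : 1 ≤ m) (u : Fin k → Fin l) (x : ℕ → Fin l) (hadm : adm A u x)
    (y : ℕ → Fin l) (N : ℕ) :
    μ (ext u ⁻¹' cyl y N ∩ cyl x m)
      ≤ ENNReal.ofReal (c0^2 * Real.exp (2 * (Kφ * (θ / (1 - θ))))
          * Real.exp (- birk φ k (ext u x))) * μ (cyl y N ∩ cyl (ext u x) (m + k)) := by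
  set D := Kφ * (θ / (1 - θ)) with hD
  have hKφ0 := Kφ_nonneg hφ x
  have hfrac : 0 ≤ θ / (1-θ) := by
    apply div_nonneg hθ.le
    linarith
  have hD0 : 0 ≤ D := by rw [hD]; exact mul_nonneg hKφ0 hfrac
  set K := c0^2 * Real.exp (2 * D) * Real.exp (- birk φ k (ext u x)) with hK
  have hc0' : (0:ℝ) < c0 := by linarith
  -- common arithmetic step
  have main : ∀ p q : ℕ → Fin l, p ∈ Adm A → q ∈ Adm A →
      (∀ i < m + k, (ext u x) i = q i) → shiftSeq^[k] q = p →
      ∀ n, k ≤ n →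
      c0 * Real.exp (birk φ (n - k) p) ≤ K * (c0⁻¹ * Real.exp (birk φ n q)) := by
    intro p q hp hq hagree hshift n hkn
    have hq' : birk φ n q = birk φ k q + birk φ (n - k) p := by
      have h2 : birk φ n q = birk φ (k + (n - k)) q := by congr 1; omega
      rw [h2, birk_add, hshift]
    have hbk : |birk φ k q - birk φ k (ext u x)| ≤ D * θ ^ m := by
      have := birk_abs_sub_le hθ hθ1 hφ (p := q) (q := ext u x) (n := m + k) (k := k)
        (by omega) (fun i hi => (hagree i hi).symm)
      have hmk : m + k - k = m := by omega
      rw [hmk] at this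
      exact this
    have hbk2 : birk φ k (ext u x) - birk φ k q ≤ 2 * D := by
      have h1 : D * θ ^ m ≤ D * 1 := by
        apply mul_le_mul_of_nonneg_left _ hD0
        exact pow_le_one₀ hθ.le hθ1.le
      have := abs_le.mp hbk
      linarith
    rw [hq', hK]
    rw [Real.exp_add]
    have hexp : Real.exp (2 * D) * Real.exp (- birk φ k (ext u x)) * Real.exp (birk φ k q) ≥ 1 := by
      rw [← Real.exp_add, ← Real.exp_add]
      apply Real.one_le_exp
      linarith
    have hpos : 0 < Real.exp (birk φ (n-k) p) := Real.exp_pos _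
    have hc2 : c0 ≤ c0^2 * c0⁻¹ := by
      rw [pow_two, mul_assoc, mul_inv_cancel₀ (ne_of_gt hc0'), mul_one]
    calc c0 * Real.exp (birk φ (n - k) p)
        ≤ (c0^2 * c0⁻¹) * ((Real.exp (2*D) * Real.exp (- birk φ k (ext u x))
            * Real.exp (birk φ k q)) * Real.exp (birk φ (n-k) p)) := by
          have h1 : (1:ℝ) * Real.exp (birk φ (n-k) p) ≤ (Real.exp (2*D)
              * Real.exp (- birk φ k (ext u x)) * Real.exp (birk φ k q))
              * Real.exp (birk φ (n-k) p) :=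
            mul_le_mul_of_nonneg_right hexp hpos.le
          nlinarith [Real.exp_pos (birk φ (n-k) p), Real.exp_pos (2*D),
            Real.exp_pos (- birk φ k (ext u x)), Real.exp_pos (birk φ k q), sq_nonneg c0,
            inv_pos.mpr hc0']
      _ = c0^2 * Real.exp (2*D) * Real.exp (- birk φ k (ext u x))
            * (c0⁻¹ * (Real.exp (birk φ k q) * Real.exp (birk φ (n-k) p))) := by ring
  have hKpos : 0 ≤ K := by
    rw [hK]
    positivity
  -- goal with K folded
  show μ (ext u ⁻¹' cyl y N ∩ cyl x m) ≤ ENNReal.ofReal K * μ (cyl y N ∩ cyl (ext u x) (m + k))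
  by_cases hemp : (cyl y N ∩ cyl (ext u x) (m + k)) = ∅
  · have hLemp : ext u ⁻¹' cyl y N ∩ cyl x m = ∅ := by
      ext z
      simp only [Set.mem_inter_iff, Set.mem_preimage, Set.mem_empty_iff_false, iff_false, not_and]
      intro h1 h2
      exact Set.eq_empty_iff_forall_notMem.mp hemp (ext u z) ⟨h1, ext_mem_cyl u h2⟩
    rw [hLemp]
    simp
  · have hne : (cyl y N ∩ cyl (ext u x) (m + k)).Nonempty := Set.nonempty_iff_ne_empty.mpr hemp
    by_cases hN : N ≤ m + k
    · -- the cylinder of `y` is coarser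
      have hsub : cyl (ext u x) (m + k) ⊆ cyl y N := cyl_inter_of_le hN hne
      have hR : cyl y N ∩ cyl (ext u x) (m + k) = cyl (ext u x) (m + k) :=
        Set.inter_eq_self_of_subset_right hsub
      rw [hR]
      have hLsub : ext u ⁻¹' cyl y N ∩ cyl x m ⊆ cyl x m := Set.inter_subset_right
      by_cases h0 : μ (cyl x m) = 0
      · exact le_trans ((measure_mono hLsub).trans (le_of_eq h0)) (zero_le)
      · obtain ⟨x', hx'C, hx'A⟩ := exists_adm_of_pos hsupp h0
        have hadm' : adm A u x' := (adm_congr A u (hx'C 0 (by omega))).mpr hadm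
        have hextA : ext u x' ∈ Adm A := adm_ext_mem hx'A hadm'
        have hextC : ext u x' ∈ cyl (ext u x) (m + k) := ext_mem_cyl u hx'C
        have hup : μ (cyl x m) ≤ ENNReal.ofReal (c0 * Real.exp (birk φ m x')) := by
          rw [← cyl_eq_of_mem hx'C]
          exact (hGibbs x' hx'A m hm).2
        have hlow : ENNReal.ofReal (c0⁻¹ * Real.exp (birk φ (m + k) (ext u x')))
            ≤ μ (cyl (ext u x) (m + k)) := by
          rw [← cyl_eq_of_mem hextC]
          exact (hGibbs (ext u x') hextA (m + k) (by omega)).1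
        have harith := main x' (ext u x') hx'A hextA
          (fun i hi => (hextC i hi).symm) (shiftSeq_iterate_ext u x') (m + k) (by omega)
        rw [show m + k - k = m by omega] at harith
        calc μ (ext u ⁻¹' cyl y N ∩ cyl x m) ≤ μ (cyl x m) := measure_mono hLsub
          _ ≤ ENNReal.ofReal (c0 * Real.exp (birk φ m x')) := hup
          _ ≤ ENNReal.ofReal (K * (c0⁻¹ * Real.exp (birk φ (m + k) (ext u x')))) :=
              ENNReal.ofReal_le_ofReal harith
          _ = ENNReal.ofReal K * ENNReal.ofReal (c0⁻¹ * Real.exp (birk φ (m + k) (ext u x'))) :=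
              ENNReal.ofReal_mul hKpos
          _ ≤ ENNReal.ofReal K * μ (cyl (ext u x) (m + k)) := by
              exact mul_le_mul_right hlow _
    · -- the cylinder of `y` is finer
      have hne' : (cyl (ext u x) (m + k) ∩ cyl y N).Nonempty := by rwa [Set.inter_comm]
      have hsub : cyl y N ⊆ cyl (ext u x) (m + k) := cyl_inter_of_le (by omega) hne'
      have hR : cyl y N ∩ cyl (ext u x) (m + k) = cyl y N :=
        Set.inter_eq_self_of_subset_left hsub
      have hyagree : ∀ i < m + k, y i = (ext u x) i := fun i hi => hsub (self_mem_cyl y N) i hi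
      have hLset : ext u ⁻¹' cyl y N ∩ cyl x m = cyl (shiftSeq^[k] y) (N - k) := by
        ext z
        simp only [Set.mem_inter_iff, Set.mem_preimage]
        constructor
        · rintro ⟨h1, _⟩ j hj
          rw [shiftSeq_iterate_apply]
          have h3 := h1 (j + k) (by omega)
          rw [ext_apply_ge _ _ (by omega)] at h3
          rw [show j + k - k = j by omega] at h3
          exact h3
        · intro hz
          have hzy : ∀ i, k ≤ i → i < N → z (i - k) = y i := by
            intro i hik hiN
            have h4 := hz (i - k) (by omega)
            rw [shiftSeq_iterate_apply] at h4
            rw [show i - k + k = i by omega] at h4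
            exact h4
          constructor
          · intro i hi
            by_cases hik : i < k
            · rw [ext_apply_lt _ _ hik]
              have h5 := hyagree i (by omega)
              rw [h5, ext_apply_lt _ _ hik]
            · rw [ext_apply_ge _ _ (by omega)]
              exact hzy i (by omega) hi
          · intro i hi
            have h6 := hzy (i + k) (by omega) (by omega)
            rw [show i + k - k = i by omega] at h6
            have h7 := hyagree (i + k) (by omega)
            rw [h6, h7, ext_apply_ge _ _ (by omega), show i + k - k = i by omega]
      rw [hLset, hR]
      by_cases h0 : μ (cyl (shiftSeq^[k] y) (N - k)) = 0
      · exact le_trans (le_of_eq h0) (zero_le)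
      · obtain ⟨z', hz'C, hz'A⟩ := exists_adm_of_pos hsupp h0
        have hz'0 : z' 0 = x 0 := by
          have h8 := hz'C 0 (by omega)
          rw [shiftSeq_iterate_apply] at h8
          have h9 := hyagree (0 + k) (by omega)
          rw [h9, ext_apply_ge _ _ (by omega), show 0 + k - k = 0 by omega] at h8
          exact h8
        have hadm' : adm A u z' := (adm_congr A u hz'0).mpr hadm
        have hextA : ext u z' ∈ Adm A := adm_ext_mem hz'A hadm'
        have hextC : ext u z' ∈ cyl y N := by
          intro i hi
          by_cases hik : i < k
          · rw [ext_apply_lt _ _ hik]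
            have h5 := hyagree i (by omega)
            rw [h5, ext_apply_lt _ _ hik]
          · rw [ext_apply_ge _ _ (by omega)]
            have h4 := hz'C (i - k) (by omega)
            rw [shiftSeq_iterate_apply, show i - k + k = i by omega] at h4
            exact h4
        have hup : μ (cyl (shiftSeq^[k] y) (N - k))
            ≤ ENNReal.ofReal (c0 * Real.exp (birk φ (N - k) z')) := by
          rw [← cyl_eq_of_mem hz'C]
          exact (hGibbs z' hz'A (N - k) (by omega)).2
        have hlow : ENNReal.ofReal (c0⁻¹ * Real.exp (birk φ N (ext u z')))
            ≤ μ (cyl y N) := by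
          rw [← cyl_eq_of_mem hextC]
          exact (hGibbs (ext u z') hextA N (by omega)).1
        have hagree2 : ∀ i < m + k, (ext u x) i = (ext u z') i := by
          intro i hi
          by_cases hik : i < k
          · rw [ext_apply_lt _ _ hik, ext_apply_lt _ _ hik]
          · rw [ext_apply_ge _ _ (by omega), ext_apply_ge _ _ (by omega)]
            have h4 := hz'C (i - k) (by omega)
            rw [shiftSeq_iterate_apply, show i - k + k = i by omega] at h4
            have h5 := hyagree i (by omega)
            rw [h4, h5, ext_apply_ge _ _ (by omega)]
        have harith := main z' (ext u z') hz'A hextA hagree2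
          (shiftSeq_iterate_ext u z') N (by omega)
        calc μ (cyl (shiftSeq^[k] y) (N - k))
            ≤ ENNReal.ofReal (c0 * Real.exp (birk φ (N - k) z')) := hup
          _ ≤ ENNReal.ofReal (K * (c0⁻¹ * Real.exp (birk φ N (ext u z')))) :=
              ENNReal.ofReal_le_ofReal harith
          _ = ENNReal.ofReal K * ENNReal.ofReal (c0⁻¹ * Real.exp (birk φ N (ext u z'))) :=
              ENNReal.ofReal_mul hKpos
          _ ≤ ENNReal.ofReal K * μ (cyl y N) := by
              exact mul_le_mul_right hlow _

end Chunk5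

namespace Chunk6
open LY Chunk2 Chunk3 Chunk4 Chunk5 MeasureTheory

variable {l : ℕ} [Nonempty (Fin l)] {A : Fin l → Fin l → Bool} {θ Kφ c0 : ℝ}
  {φ : (ℕ → Fin l) → ℝ} {μ : Measure (ℕ → Fin l)} [IsProbabilityMeasure μ]

lemma map_ext_ac
    (hθ : 0 < θ) (hθ1 : θ < 1)
    (hφ : ∀ x y : ℕ → Fin l, ∀ n : ℕ, (∀ i < n, x i = y i) → |φ x - φ y| ≤ Kφ * θ ^ n)
    (hsupp : μ (Adm A) = 1) (hc0 : 1 < c0)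
    (hGibbs : ∀ x : ℕ → Fin l, (∀ n, A (x n) (x (n + 1)) = true) → ∀ n : ℕ, 1 ≤ n →
      ENNReal.ofReal (c0⁻¹ * Real.exp (birk φ n x)) ≤ μ (cyl x n) ∧
      μ (cyl x n) ≤ ENNReal.ofReal (c0 * Real.exp (birk φ n x)))
    {k m : ℕ} (hm : 1 ≤ m) (u : Fin k → Fin l) (x : ℕ → Fin l) (hadm : adm A u x) :
    Measure.map (ext u) (μ.restrict (cyl x m)) ≪ μ.restrict (cyl (ext u x) (m + k)) := by
  set Kr : NNReal := Real.toNNReal (c0^2 * Real.exp (2 * (Kφ * (θ / (1 - θ))))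
    * Real.exp (- birk φ k (ext u x))) with hKr
  set ν := Measure.map (ext u) (μ.restrict (cyl x m)) with hν
  have hνcyl : ∀ (p : ℕ → Fin l) (N : ℕ), ν (cyl p N) ≤ (Kr • μ) (cyl p N) := by
    intro p N
    rw [hν, Measure.map_apply (measurable_ext u) (measurableSet_cyl p N),
      Measure.restrict_apply ((measurable_ext u) (measurableSet_cyl p N))]
    calc μ (ext u ⁻¹' cyl p N ∩ cyl x m)
        ≤ ENNReal.ofReal (c0^2 * Real.exp (2 * (Kφ * (θ / (1 - θ))))
            * Real.exp (- birk φ k (ext u x))) * μ (cyl p N ∩ cyl (ext u x) (m + k)) :=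
          cyl_compare hθ hθ1 hφ hsupp hc0 hGibbs hm u x hadm p N
      _ ≤ ENNReal.ofReal (c0^2 * Real.exp (2 * (Kφ * (θ / (1 - θ))))
            * Real.exp (- birk φ k (ext u x))) * μ (cyl p N) := by
          exact mul_le_mul_right (measure_mono Set.inter_subset_left) _
      _ = (Kr • μ) (cyl p N) := by
          rw [Measure.smul_apply, ENNReal.smul_def]
          rfl
  have hall : ∀ S : Set (ℕ → Fin l), MeasurableSet S → ν S ≤ (Kr • μ) S := by
    intro S hS
    exact measure_le_of_forall_cyl_le hνcyl hS
  apply Measure.AbsolutelyContinuous.mk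
  intro S hS hS0
  rw [Measure.restrict_apply hS] at hS0
  have hmeas : MeasurableSet (S ∩ cyl (ext u x) (m + k)) :=
    hS.inter (measurableSet_cyl _ _)
  have heq : ν S = ν (S ∩ cyl (ext u x) (m + k)) := by
    rw [hν, Measure.map_apply (measurable_ext u) hS,
      Measure.map_apply (measurable_ext u) hmeas,
      Measure.restrict_apply ((measurable_ext u) hS),
      Measure.restrict_apply ((measurable_ext u) hmeas)]
    congr 1
    ext z
    simp only [Set.mem_inter_iff, Set.mem_preimage]
    constructor
    · rintro ⟨h1, h2⟩
      exact ⟨⟨h1, ext_mem_cyl u h2⟩, h2⟩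
    · rintro ⟨⟨h1, _⟩, h2⟩
      exact ⟨h1, h2⟩
  rw [heq]
  have := hall _ hmeas
  rw [Measure.smul_apply, hS0, smul_zero] at this
  exact le_antisymm this (zero_le)

lemma isFiniteMeasure_map_ext {k m : ℕ} (u : Fin k → Fin l) (x : ℕ → Fin l) :
    IsFiniteMeasure (Measure.map (ext u) (μ.restrict (cyl x m))) := by
  constructor
  rw [Measure.map_apply (measurable_ext u) MeasurableSet.univ]
  exact lt_of_le_of_lt (measure_mono (Set.subset_univ _)) (measure_lt_top _ _)

lemma essSup_pair_ext_le
    (hθ : 0 < θ) (hθ1 : θ < 1)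
    (hφ : ∀ x y : ℕ → Fin l, ∀ n : ℕ, (∀ i < n, x i = y i) → |φ x - φ y| ≤ Kφ * θ ^ n)
    (hsupp : μ (Adm A) = 1) (hc0 : 1 < c0)
    (hGibbs : ∀ x : ℕ → Fin l, (∀ n, A (x n) (x (n + 1)) = true) → ∀ n : ℕ, 1 ≤ n →
      ENNReal.ofReal (c0⁻¹ * Real.exp (birk φ n x)) ≤ μ (cyl x n) ∧
      μ (cyl x n) ≤ ENNReal.ofReal (c0 * Real.exp (birk φ n x)))
    {k m : ℕ} (hm : 1 ≤ m) (u : Fin k → Fin l) (x : ℕ → Fin l) (hadm : adm A u x)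
    {w : (ℕ → Fin l) → ℝ} (hw : Measurable w) :
    essSup (fun p : (ℕ → Fin l) × (ℕ → Fin l) => ENNReal.ofReal |w (ext u p.1) - w (ext u p.2)|)
        ((μ.restrict (cyl x m)).prod (μ.restrict (cyl x m)))
      ≤ oscE μ w (m + k) (ext u x) := by
  set ν := Measure.map (ext u) (μ.restrict (cyl x m)) with hν
  haveI := isFiniteMeasure_map_ext (μ := μ) u x (m := m)
  have hac : ν ≪ μ.restrict (cyl (ext u x) (m + k)) :=
    map_ext_ac hθ hθ1 hφ hsupp hc0 hGibbs hm u x hadm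
  have hg : Measurable (fun p : (ℕ → Fin l) × (ℕ → Fin l) => ENNReal.ofReal |w p.1 - w p.2|) :=
    ((hw.comp measurable_fst).sub (hw.comp measurable_snd)).abs.ennreal_ofReal
  have hmap : ν.prod ν = Measure.map (Prod.map (ext u) (ext u))
      ((μ.restrict (cyl x m)).prod (μ.restrict (cyl x m))) := by
    rw [hν]
    exact Measure.map_prod_map (μ.restrict (cyl x m)) (μ.restrict (cyl x m)) (measurable_ext u) (measurable_ext u)
  have h1 : essSup (fun p : (ℕ → Fin l) × (ℕ → Fin l)
        => ENNReal.ofReal |w (ext u p.1) - w (ext u p.2)|)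
      ((μ.restrict (cyl x m)).prod (μ.restrict (cyl x m)))
      = essSup (fun p : (ℕ → Fin l) × (ℕ → Fin l) => ENNReal.ofReal |w p.1 - w p.2|)
        (ν.prod ν) := by
    rw [hmap]
    rw [essSup_map_measure hg.aemeasurable
      ((measurable_ext u).prodMap (measurable_ext u)).aemeasurable]
    rfl
  rw [h1]
  exact essSup_mono_measure (μ := (μ.restrict (cyl (ext u x) (m + k))).prod
    (μ.restrict (cyl (ext u x) (m + k)))) (hac.prod hac)

lemma essSup_snd_ext_le
    (hθ : 0 < θ) (hθ1 : θ < 1)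
    (hφ : ∀ x y : ℕ → Fin l, ∀ n : ℕ, (∀ i < n, x i = y i) → |φ x - φ y| ≤ Kφ * θ ^ n)
    (hsupp : μ (Adm A) = 1) (hc0 : 1 < c0)
    (hGibbs : ∀ x : ℕ → Fin l, (∀ n, A (x n) (x (n + 1)) = true) → ∀ n : ℕ, 1 ≤ n →
      ENNReal.ofReal (c0⁻¹ * Real.exp (birk φ n x)) ≤ μ (cyl x n) ∧
      μ (cyl x n) ≤ ENNReal.ofReal (c0 * Real.exp (birk φ n x)))
    {k m : ℕ} (hm : 1 ≤ m) (u : Fin k → Fin l) (x : ℕ → Fin l) (hadm : adm A u x)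
    {w : (ℕ → Fin l) → ℝ} (hw : Measurable w) :
    essSup (fun p : (ℕ → Fin l) × (ℕ → Fin l) => ENNReal.ofReal |w (ext u p.2)|)
        ((μ.restrict (cyl x m)).prod (μ.restrict (cyl x m)))
      ≤ essSup (fun z => ENNReal.ofReal |w z|) (μ.restrict (cyl (ext u x) (m + k))) := by
  set ν := Measure.map (ext u) (μ.restrict (cyl x m)) with hν
  haveI := isFiniteMeasure_map_ext (μ := μ) u x (m := m)
  have hac : ν ≪ μ.restrict (cyl (ext u x) (m + k)) :=
    map_ext_ac hθ hθ1 hφ hsupp hc0 hGibbs hm u x hadm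
  have hh : Measurable (fun z : ℕ → Fin l => ENNReal.ofReal |w (ext u z)|) :=
    ((hw.comp (measurable_ext u)).abs).ennreal_ofReal
  have h1 : essSup (fun p : (ℕ → Fin l) × (ℕ → Fin l) => ENNReal.ofReal |w (ext u p.2)|)
      ((μ.restrict (cyl x m)).prod (μ.restrict (cyl x m)))
      = essSup (fun z => ENNReal.ofReal |w (ext u z)|)
        (Measure.map Prod.snd ((μ.restrict (cyl x m)).prod (μ.restrict (cyl x m)))) := by
    rw [essSup_map_measure hh.aemeasurable measurable_snd.aemeasurable]
    rfl
  rw [h1, Measure.map_snd_prod]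
  simp only [Measure.restrict_apply_univ]
  by_cases h0 : μ (cyl x m) = 0
  · rw [h0]
    simp only [zero_smul]
    rw [essSup_measure_zero]
    exact zero_le
  · have hsm : ∀ f : (ℕ → Fin l) → ℝ≥0∞, essSup f (μ (cyl x m) • μ.restrict (cyl x m))
        = essSup f (μ.restrict (cyl x m)) := fun f => by
      exact le_antisymm (essSup_mono_measure Measure.smul_absolutelyContinuous)
        (essSup_mono_measure (Measure.absolutelyContinuous_smul h0))
    rw [hsm]
    have h2 : essSup (fun z => ENNReal.ofReal |w (ext u z)|) (μ.restrict (cyl x m))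
        = essSup (fun z => ENNReal.ofReal |w z|) ν := by
      rw [hν, essSup_map_measure (hw.abs.ennreal_ofReal).aemeasurable
        (measurable_ext u).aemeasurable]
      rfl
    rw [h2]
    exact essSup_mono_measure hac

lemma essSup_le_avg_add_osc (ν : Measure (ℕ → Fin l)) [IsFiniteMeasure ν]
    {w : (ℕ → Fin l) → ℝ} (hw : Measurable w) :
    essSup (fun z => ENNReal.ofReal |w z|) ν
      ≤ (ν Set.univ)⁻¹ * ∫⁻ z, ENNReal.ofReal |w z| ∂ν
        + essSup (fun p : (ℕ → Fin l) × (ℕ → Fin l) => ENNReal.ofReal |w p.1 - w p.2|)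
            (ν.prod ν) := by
  by_cases h0 : ν Set.univ = 0
  · have : ν = 0 := Measure.measure_univ_eq_zero.mp h0
    rw [this, essSup_measure_zero]
    exact zero_le
  set S := essSup (fun p : (ℕ → Fin l) × (ℕ → Fin l) => ENNReal.ofReal |w p.1 - w p.2|)
    (ν.prod ν) with hS
  have hae : ∀ᵐ p ∂(ν.prod ν), ENNReal.ofReal |w p.1 - w p.2| ≤ S :=
    ENNReal.ae_le_essSup _
  have hae2 : ∀ᵐ z ∂ν, ∀ᵐ q ∂ν, ENNReal.ofReal |w z - w q| ≤ S :=
    Measure.ae_ae_of_ae_prod hae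
  have hbound : ∀ᵐ z ∂ν, ENNReal.ofReal |w z|
      ≤ (ν Set.univ)⁻¹ * ∫⁻ q, ENNReal.ofReal |w q| ∂ν + S := by
    filter_upwards [hae2] with z hz
    have hint : ENNReal.ofReal |w z| * ν Set.univ
        ≤ ∫⁻ q, ENNReal.ofReal |w q| ∂ν + S * ν Set.univ := by
      have hptwise : ∀ᵐ q ∂ν, ENNReal.ofReal |w z| ≤ ENNReal.ofReal |w q| + S := by
        filter_upwards [hz] with q hq
        calc ENNReal.ofReal |w z| ≤ ENNReal.ofReal (|w q| + |w z - w q|) := by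
              apply ENNReal.ofReal_le_ofReal
              have := abs_sub_abs_le_abs_sub (w z) (w q)
              linarith [abs_abs_sub_abs_le_abs_sub (w z) (w q)]
          _ ≤ ENNReal.ofReal |w q| + ENNReal.ofReal |w z - w q| := ENNReal.ofReal_add_le
          _ ≤ ENNReal.ofReal |w q| + S := add_le_add_right hq _
      calc ENNReal.ofReal |w z| * ν Set.univ
          = ∫⁻ _, ENNReal.ofReal |w z| ∂ν := (lintegral_const _).symm
        _ ≤ ∫⁻ q, (ENNReal.ofReal |w q| + S) ∂ν := lintegral_mono_ae hptwise
        _ = ∫⁻ q, ENNReal.ofReal |w q| ∂ν + S * ν Set.univ := by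
            rw [lintegral_add_right _ measurable_const, lintegral_const]
    have hfin : ν Set.univ ≠ ⊤ := measure_ne_top _ _
    rw [← ENNReal.le_div_iff_mul_le (Or.inl h0) (Or.inl hfin)] at hint
    calc ENNReal.ofReal |w z|
        ≤ (∫⁻ q, ENNReal.ofReal |w q| ∂ν + S * ν Set.univ) / ν Set.univ := hint
      _ = (∫⁻ q, ENNReal.ofReal |w q| ∂ν) / ν Set.univ
          + S * ν Set.univ / ν Set.univ := by rw [ENNReal.add_div]
      _ ≤ (ν Set.univ)⁻¹ * ∫⁻ q, ENNReal.ofReal |w q| ∂ν + S := by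
          apply add_le_add
          · rw [ENNReal.div_eq_inv_mul]
          · rw [mul_div_assoc, ENNReal.div_self h0 hfin, mul_one]
  exact essSup_le_of_ae_le _ hbound

end Chunk6

namespace Chunk7
open LY Chunk2 Chunk3 Chunk4 Chunk5 Chunk6 MeasureTheory

variable {l : ℕ} [Nonempty (Fin l)] {A : Fin l → Fin l → Bool} {θ Kφ c0 : ℝ}
  {φ : (ℕ → Fin l) → ℝ} {μ : Measure (ℕ → Fin l)} [IsProbabilityMeasure μ]

lemma oscE_congr {w : (ℕ → Fin l) → ℝ} {n : ℕ} {p q : ℕ → Fin l} (h : p ∈ cyl q n) :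
    oscE μ w n p = oscE μ w n q := by
  unfold oscE
  rw [cyl_eq_of_mem h]

lemma essSup_finset_sum_le {ι : Type*} (s : Finset ι) (f : ι → ((ℕ → Fin l) × (ℕ → Fin l)) → ℝ≥0∞)
    (ν : Measure ((ℕ → Fin l) × (ℕ → Fin l))) :
    essSup (fun a => ∑ i ∈ s, f i a) ν ≤ ∑ i ∈ s, essSup (f i) ν := by
  classical
  induction s using Finset.induction_on with
  | empty =>
    simp only [Finset.sum_empty]
    exact essSup_le_of_ae_le _ (Filter.Eventually.of_forall (fun _ => le_rfl))
  | insert a s ha ih =>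
    simp only [Finset.sum_insert ha]
    calc essSup (fun p => f a p + ∑ i ∈ s, f i p) ν
        ≤ essSup (f a) ν + essSup (fun p => ∑ i ∈ s, f i p) ν :=
          ENNReal.essSup_add_le _ _
      _ ≤ essSup (f a) ν + ∑ i ∈ s, essSup (f i) ν := add_le_add_right ih _

/-- Step A : pointwise bound of `oscE` of the iterate. -/
lemma stepA
    (hθ : 0 < θ) (hθ1 : θ < 1)
    (hφ : ∀ x y : ℕ → Fin l, ∀ n : ℕ, (∀ i < n, x i = y i) → |φ x - φ y| ≤ Kφ * θ ^ n)
    (hsupp : μ (Adm A) = 1) (hc0 : 1 < c0)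
    (hGibbs : ∀ x : ℕ → Fin l, (∀ n, A (x n) (x (n + 1)) = true) → ∀ n : ℕ, 1 ≤ n →
      ENNReal.ofReal (c0⁻¹ * Real.exp (birk φ n x)) ≤ μ (cyl x n) ∧
      μ (cyl x n) ≤ ENNReal.ofReal (c0 * Real.exp (birk φ n x)))
    {k m : ℕ} (hm : 1 ≤ m) (x : ℕ → Fin l) {w : (ℕ → Fin l) → ℝ} (hw : Measurable w) :
    oscE μ ((transfer A φ)^[k] w) m x
      ≤ ∑ u : Fin k → Fin l, (if adm A u x then
          ENNReal.ofReal (Real.exp (Kφ * (θ / (1 - θ))) * Real.exp (birk φ k (ext u x)))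
          * (oscE μ w (m + k) (ext u x)
             + ENNReal.ofReal (2 * (Kφ * (θ / (1 - θ)))
                  * Real.exp (2 * (Kφ * (θ / (1 - θ)))) * θ ^ m)
               * ((μ (cyl (ext u x) (m + k)))⁻¹
                   * ∫⁻ z in cyl (ext u x) (m + k), ENNReal.ofReal |w z| ∂μ
                  + oscE μ w (m + k) (ext u x))) else 0) := by
  classical
  set D := Kφ * (θ / (1 - θ)) with hD
  have hKφ0 := Kφ_nonneg hφ x
  have hfrac : 0 ≤ θ / (1 - θ) := div_nonneg hθ.le (by linarith)
  have hD0 : 0 ≤ D := mul_nonneg hKφ0 hfrac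
  set E := Real.exp D with hE
  have hE1 : 1 ≤ E := Real.one_le_exp hD0
  set C := cyl x m with hC
  set π := (μ.restrict C).prod (μ.restrict C) with hπ
  set f1 : (Fin k → Fin l) → ((ℕ → Fin l) × (ℕ → Fin l)) → ℝ≥0∞ :=
    fun u p => ENNReal.ofReal |w (ext u p.1) - w (ext u p.2)| with hf1
  set f2 : (Fin k → Fin l) → ((ℕ → Fin l) × (ℕ → Fin l)) → ℝ≥0∞ :=
    fun u p => ENNReal.ofReal |w (ext u p.2)| with hf2
  set Φ : (Fin k → Fin l) → ((ℕ → Fin l) × (ℕ → Fin l)) → ℝ≥0∞ :=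
    fun u p => (if adm A u x then
      ENNReal.ofReal (E * Real.exp (birk φ k (ext u x)))
        * (f1 u p + ENNReal.ofReal (2 * D * Real.exp (2 * D) * θ ^ m) * f2 u p) else 0) with hΦ
  have hmem : ∀ᵐ p ∂π, p.1 ∈ C ∧ p.2 ∈ C := by
    rw [hπ, Measure.prod_restrict]
    filter_upwards [ae_restrict_mem ((measurableSet_cyl x m).prod (measurableSet_cyl x m))]
      with p hp
    exact ⟨hp.1, hp.2⟩
  -- pointwise bound
  have hae : ∀ᵐ p ∂π, ENNReal.ofReal
      |((transfer A φ)^[k] w) p.1 - ((transfer A φ)^[k] w) p.2|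
      ≤ ∑ u : Fin k → Fin l, Φ u p := by
    filter_upwards [hmem] with p hp
    obtain ⟨hp1, hp2⟩ := hp
    set y := p.1
    set z := p.2
    -- agreement facts
    have hby : ∀ u : Fin k → Fin l, |birk φ k (ext u y) - birk φ k (ext u x)| ≤ D * θ ^ m := by
      intro u
      have hmm := birk_abs_sub_le hθ hθ1 hφ (p := ext u y) (q := ext u x) (n := m + k) (k := k)
        (by omega) (fun i hi => ext_mem_cyl u hp1 i hi)
      rwa [show m + k - k = m by omega] at hmm
    have hbz : ∀ u : Fin k → Fin l, |birk φ k (ext u z) - birk φ k (ext u x)| ≤ D * θ ^ m := by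
      intro u
      have hmm := birk_abs_sub_le hθ hθ1 hφ (p := ext u z) (q := ext u x) (n := m + k) (k := k)
        (by omega) (fun i hi => ext_mem_cyl u hp2 i hi)
      rwa [show m + k - k = m by omega] at hmm
    have hθm1 : θ ^ m ≤ 1 := pow_le_one₀ hθ.le hθ1.le
    have hθm0 : 0 ≤ θ ^ m := by positivity
    have hDθ : 0 ≤ D * θ ^ m := by positivity
    have hDθD : D * θ ^ m ≤ D := by nlinarith
    -- the representation of the iterates
    have hFy : ((transfer A φ)^[k] w) y = ∑ u : Fin k → Fin l,
        (if adm A u x then Real.exp (birk φ k (ext u y)) * w (ext u y) else 0) := by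
      rw [transfer_iterate]
      apply Finset.sum_congr rfl
      intro u _
      congr 1
      rw [eq_iff_iff]
      exact adm_congr A u (hp1 0 (by omega))
    have hFz : ((transfer A φ)^[k] w) z = ∑ u : Fin k → Fin l,
        (if adm A u x then Real.exp (birk φ k (ext u z)) * w (ext u z) else 0) := by
      rw [transfer_iterate]
      apply Finset.sum_congr rfl
      intro u _
      congr 1
      rw [eq_iff_iff]
      exact adm_congr A u (hp2 0 (by omega))
    -- triangle inequality over the sum
    have habs : |((transfer A φ)^[k] w) y - ((transfer A φ)^[k] w) z|
        ≤ ∑ u : Fin k → Fin l, (if adm A u x then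
            |Real.exp (birk φ k (ext u y)) * w (ext u y)
              - Real.exp (birk φ k (ext u z)) * w (ext u z)| else 0) := by
      rw [hFy, hFz, ← Finset.sum_sub_distrib]
      refine le_trans (Finset.abs_sum_le_sum_abs _ _) ?_
      apply le_of_eq
      apply Finset.sum_congr rfl
      intro u _
      by_cases h : adm A u x
      · rw [if_pos h, if_pos h, if_pos h]
      · rw [if_neg h, if_neg h, if_neg h]
        simp
    calc ENNReal.ofReal |((transfer A φ)^[k] w) y - ((transfer A φ)^[k] w) z|
        ≤ ENNReal.ofReal (∑ u : Fin k → Fin l, (if adm A u x then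
            |Real.exp (birk φ k (ext u y)) * w (ext u y)
              - Real.exp (birk φ k (ext u z)) * w (ext u z)| else 0)) :=
          ENNReal.ofReal_le_ofReal habs
      _ = ∑ u : Fin k → Fin l, ENNReal.ofReal (if adm A u x then
            |Real.exp (birk φ k (ext u y)) * w (ext u y)
              - Real.exp (birk φ k (ext u z)) * w (ext u z)| else 0) := by
          rw [ENNReal.ofReal_sum_of_nonneg]
          intro u _
          by_cases h : adm A u x
          · rw [if_pos h]; positivity
          · rw [if_neg h]
      _ ≤ ∑ u : Fin k → Fin l, Φ u p := by
          apply Finset.sum_le_sum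
          intro u _
          by_cases h : adm A u x
          · rw [if_pos h, hΦ]
            simp only [if_pos h]
            -- the real-variable estimate
            have hreal : |Real.exp (birk φ k (ext u y)) * w (ext u y)
                - Real.exp (birk φ k (ext u z)) * w (ext u z)|
                ≤ (E * Real.exp (birk φ k (ext u x))) * |w (ext u y) - w (ext u z)|
                  + ((E * Real.exp (birk φ k (ext u x))) * (2 * D * Real.exp (2 * D) * θ ^ m))
                    * |w (ext u z)| := by
              set by_ := birk φ k (ext u y)
              set bz_ := birk φ k (ext u z)
              set bx_ := birk φ k (ext u x)
              have hyx : Real.exp by_ ≤ E * Real.exp bx_ := by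
                rw [hE]
                exact exp_le_exp_mul_of_abs_sub (le_trans (hby u) hDθD)
              have hdiff : |Real.exp by_ - Real.exp bz_|
                  ≤ (2 * (D * θ ^ m)) * Real.exp (2 * (D * θ ^ m)) * Real.exp bz_ := by
                apply abs_exp_sub_exp_le
                have h1 := hby u
                have h2 := hbz u
                have := abs_sub_abs_le_abs_sub by_ bz_
                calc |by_ - bz_| = |(by_ - bx_) - (bz_ - bx_)| := by ring_nf
                  _ ≤ |by_ - bx_| + |bz_ - bx_| := abs_sub _ _
                  _ ≤ 2 * (D * θ ^ m) := by linarith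
              have hzx : Real.exp bz_ ≤ E * Real.exp bx_ := by
                rw [hE]
                exact exp_le_exp_mul_of_abs_sub (le_trans (hbz u) hDθD)
              have hsplit : Real.exp by_ * w (ext u y) - Real.exp bz_ * w (ext u z)
                  = Real.exp by_ * (w (ext u y) - w (ext u z))
                    + (Real.exp by_ - Real.exp bz_) * w (ext u z) := by ring
              rw [hsplit]
              have hexp2 : Real.exp (2 * (D * θ ^ m)) ≤ Real.exp (2 * D) :=
                Real.exp_le_exp.mpr (by nlinarith)
              calc |Real.exp by_ * (w (ext u y) - w (ext u z))
                    + (Real.exp by_ - Real.exp bz_) * w (ext u z)|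
                  ≤ |Real.exp by_| * |w (ext u y) - w (ext u z)|
                    + |Real.exp by_ - Real.exp bz_| * |w (ext u z)| := by
                    refine le_trans (abs_add_le _ _) ?_
                    rw [abs_mul, abs_mul]
                _ ≤ (E * Real.exp bx_) * |w (ext u y) - w (ext u z)|
                    + ((2 * (D * θ ^ m)) * Real.exp (2 * (D * θ ^ m)) * Real.exp bz_)
                      * |w (ext u z)| := by
                    apply add_le_add
                    · apply mul_le_mul_of_nonneg_right _ (abs_nonneg _)
                      rw [abs_of_pos (Real.exp_pos _)]
                      exact hyx
                    · exact mul_le_mul_of_nonneg_right hdiff (abs_nonneg _)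
                _ ≤ (E * Real.exp bx_) * |w (ext u y) - w (ext u z)|
                    + ((E * Real.exp bx_) * (2 * D * Real.exp (2 * D) * θ ^ m))
                      * |w (ext u z)| := by
                    apply add_le_add_right
                    apply mul_le_mul_of_nonneg_right _ (abs_nonneg _)
                    have hEb : 0 < Real.exp bx_ := Real.exp_pos _
                    have h2 : (2 * (D * θ ^ m)) * Real.exp (2 * (D * θ ^ m)) * Real.exp bz_
                        ≤ (2 * (D * θ ^ m)) * Real.exp (2 * D) * (E * Real.exp bx_) := by
                      apply mul_le_mul
                      · exact mul_le_mul_of_nonneg_left hexp2 (by positivity)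
                      · exact hzx
                      · positivity
                      · positivity
                    calc (2 * (D * θ ^ m)) * Real.exp (2 * (D * θ ^ m)) * Real.exp bz_
                        ≤ (2 * (D * θ ^ m)) * Real.exp (2 * D) * (E * Real.exp bx_) := h2
                      _ = E * Real.exp bx_ * (2 * D * Real.exp (2 * D) * θ ^ m) := by ring
            have hcoef0 : 0 ≤ E * Real.exp (birk φ k (ext u x)) := by positivity
            have hcoef20 : 0 ≤ 2 * D * Real.exp (2 * D) * θ ^ m := by positivity
            calc ENNReal.ofReal |Real.exp (birk φ k (ext u y)) * w (ext u y)
                  - Real.exp (birk φ k (ext u z)) * w (ext u z)|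
                ≤ ENNReal.ofReal ((E * Real.exp (birk φ k (ext u x)))
                      * |w (ext u y) - w (ext u z)|
                    + ((E * Real.exp (birk φ k (ext u x)))
                        * (2 * D * Real.exp (2 * D) * θ ^ m)) * |w (ext u z)|) :=
                  ENNReal.ofReal_le_ofReal hreal
              _ ≤ ENNReal.ofReal ((E * Real.exp (birk φ k (ext u x)))
                      * |w (ext u y) - w (ext u z)|)
                  + ENNReal.ofReal (((E * Real.exp (birk φ k (ext u x)))
                      * (2 * D * Real.exp (2 * D) * θ ^ m)) * |w (ext u z)|) :=
                  ENNReal.ofReal_add_le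
              _ = ENNReal.ofReal (E * Real.exp (birk φ k (ext u x)))
                    * (f1 u p + ENNReal.ofReal (2 * D * Real.exp (2 * D) * θ ^ m) * f2 u p) := by
                  rw [mul_add]
                  congr 1
                  · rw [ENNReal.ofReal_mul hcoef0]
                  · rw [ENNReal.ofReal_mul (by positivity), ENNReal.ofReal_mul hcoef0,
                      mul_assoc]
          · rw [if_neg h, hΦ]
            simp only [if_neg h]
            simp
  -- now pass to essential suprema
  have h1 : oscE μ ((transfer A φ)^[k] w) m x
      ≤ essSup (fun p => ∑ u : Fin k → Fin l, Φ u p) π := by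
    unfold oscE
    exact essSup_mono_ae hae
  refine le_trans h1 (le_trans (essSup_finset_sum_le _ _ _) (Finset.sum_le_sum ?_))
  intro u _
  by_cases h : adm A u x
  · rw [hΦ]
    simp only [if_pos h]
    calc essSup (fun p => ENNReal.ofReal (E * Real.exp (birk φ k (ext u x)))
          * (f1 u p + ENNReal.ofReal (2 * D * Real.exp (2 * D) * θ ^ m) * f2 u p)) π
        = ENNReal.ofReal (E * Real.exp (birk φ k (ext u x)))
          * essSup (fun p => f1 u p
              + ENNReal.ofReal (2 * D * Real.exp (2 * D) * θ ^ m) * f2 u p) π :=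
          ENNReal.essSup_const_mul
      _ ≤ ENNReal.ofReal (E * Real.exp (birk φ k (ext u x)))
          * (essSup (f1 u) π + essSup (fun p => ENNReal.ofReal (2 * D
              * Real.exp (2 * D) * θ ^ m) * f2 u p) π) := by
          apply mul_le_mul_right
          exact ENNReal.essSup_add_le _ _
      _ = ENNReal.ofReal (E * Real.exp (birk φ k (ext u x)))
          * (essSup (f1 u) π + ENNReal.ofReal (2 * D * Real.exp (2 * D) * θ ^ m)
              * essSup (f2 u) π) := by
          rw [ENNReal.essSup_const_mul]
      _ ≤ ENNReal.ofReal (E * Real.exp (birk φ k (ext u x)))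
          * (oscE μ w (m + k) (ext u x)
            + ENNReal.ofReal (2 * D * Real.exp (2 * D) * θ ^ m)
              * ((μ (cyl (ext u x) (m + k)))⁻¹
                  * ∫⁻ z in cyl (ext u x) (m + k), ENNReal.ofReal |w z| ∂μ
                 + oscE μ w (m + k) (ext u x))) := by
          apply mul_le_mul_right
          apply add_le_add
          · exact essSup_pair_ext_le hθ hθ1 hφ hsupp hc0 hGibbs hm u x h hw
          · apply mul_le_mul_right
            -- essSup of f2 bounded by average plus oscillation
            have hstep1 := essSup_snd_ext_le hθ hθ1 hφ hsupp hc0 hGibbs hm u x h hw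
            have hstep2 := essSup_le_avg_add_osc (μ.restrict (cyl (ext u x) (m + k))) hw
            rw [Measure.restrict_apply_univ] at hstep2
            have hstep3 : essSup (fun p : (ℕ → Fin l) × (ℕ → Fin l)
                => ENNReal.ofReal |w p.1 - w p.2|)
                ((μ.restrict (cyl (ext u x) (m + k))).prod
                  (μ.restrict (cyl (ext u x) (m + k))))
                = oscE μ w (m + k) (ext u x) := rfl
            rw [hstep3] at hstep2
            exact le_trans hstep1 hstep2
  · rw [hΦ]
    simp only [if_neg h]
    exact essSup_le_of_ae_le 0 (Filter.Eventually.of_forall (fun _ => le_rfl))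

end Chunk7

namespace Chunk8
open LY Chunk2 Chunk3 Chunk4 Chunk5 Chunk6 Chunk7 MeasureTheory

variable {l : ℕ} [Nonempty (Fin l)] {A : Fin l → Fin l → Bool} {θ Kφ c0 : ℝ}
  {φ : (ℕ → Fin l) → ℝ} {μ : Measure (ℕ → Fin l)} [IsProbabilityMeasure μ]

lemma cylinder_swap
    (hθ : 0 < θ) (hθ1 : θ < 1)
    (hφ : ∀ x y : ℕ → Fin l, ∀ n : ℕ, (∀ i < n, x i = y i) → |φ x - φ y| ≤ Kφ * θ ^ n)
    (hsupp : μ (Adm A) = 1) (hc0 : 1 < c0)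
    (hGibbs : ∀ x : ℕ → Fin l, (∀ n, A (x n) (x (n + 1)) = true) → ∀ n : ℕ, 1 ≤ n →
      ENNReal.ofReal (c0⁻¹ * Real.exp (birk φ n x)) ≤ μ (cyl x n) ∧
      μ (cyl x n) ≤ ENNReal.ofReal (c0 * Real.exp (birk φ n x)))
    {k m : ℕ} (hm : 1 ≤ m) (u : Fin k → Fin l) (x : ℕ → Fin l) (hadm : adm A u x) :
    μ (cyl x m) * ENNReal.ofReal (Real.exp (birk φ k (ext u x)))
      ≤ ENNReal.ofReal (c0^2 * Real.exp (Kφ * (θ / (1 - θ)))) * μ (cyl (ext u x) (m + k)) := by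
  set D := Kφ * (θ / (1 - θ)) with hD
  have hKφ0 := Kφ_nonneg hφ x
  have hfrac : 0 ≤ θ / (1 - θ) := div_nonneg hθ.le (by linarith)
  have hD0 : 0 ≤ D := mul_nonneg hKφ0 hfrac
  have hc0' : (0:ℝ) < c0 := by linarith
  by_cases h0 : μ (cyl x m) = 0
  · rw [h0, zero_mul]
    exact zero_le
  obtain ⟨x', hx'C, hx'A⟩ := exists_adm_of_pos hsupp h0
  have hadm' : adm A u x' := (adm_congr A u (hx'C 0 (by omega))).mpr hadm
  have hextA : ext u x' ∈ Adm A := adm_ext_mem hx'A hadm'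
  have hextC : ext u x' ∈ cyl (ext u x) (m + k) := ext_mem_cyl u hx'C
  have hup : μ (cyl x m) ≤ ENNReal.ofReal (c0 * Real.exp (birk φ m x')) := by
    rw [← cyl_eq_of_mem hx'C]
    exact (hGibbs x' hx'A m hm).2
  have hlow : ENNReal.ofReal (c0⁻¹ * Real.exp (birk φ (m + k) (ext u x')))
      ≤ μ (cyl (ext u x) (m + k)) := by
    rw [← cyl_eq_of_mem hextC]
    exact (hGibbs (ext u x') hextA (m + k) (by omega)).1
  have hsplit : birk φ (m + k) (ext u x') = birk φ k (ext u x') + birk φ m x' := by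
    rw [show m + k = k + m by omega, birk_add, shiftSeq_iterate_ext]
  have hbb : |birk φ k (ext u x) - birk φ k (ext u x')| ≤ D * θ ^ m := by
    have hmm := birk_abs_sub_le hθ hθ1 hφ (p := ext u x) (q := ext u x') (n := m + k) (k := k)
      (by omega) (fun i hi => (hextC i hi).symm)
    rwa [show m + k - k = m by omega] at hmm
  have hbD : |birk φ k (ext u x) - birk φ k (ext u x')| ≤ D := by
    have : D * θ ^ m ≤ D * 1 := by
      apply mul_le_mul_of_nonneg_left _ hD0
      exact pow_le_one₀ hθ.le hθ1.le
    linarith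
  have hexp : Real.exp (birk φ k (ext u x)) ≤ Real.exp D * Real.exp (birk φ k (ext u x')) :=
    exp_le_exp_mul_of_abs_sub hbD
  have hreal : c0 * Real.exp (birk φ m x') * Real.exp (birk φ k (ext u x))
      ≤ (c0^2 * Real.exp D) * (c0⁻¹ * Real.exp (birk φ (m + k) (ext u x'))) := by
    rw [hsplit, Real.exp_add]
    have h1 : c0 * Real.exp (birk φ m x') * Real.exp (birk φ k (ext u x))
        ≤ c0 * Real.exp (birk φ m x') * (Real.exp D * Real.exp (birk φ k (ext u x'))) := by
      apply mul_le_mul_of_nonneg_left hexp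
      positivity
    have h2 : c0 * Real.exp (birk φ m x') * (Real.exp D * Real.exp (birk φ k (ext u x')))
        = (c0^2 * Real.exp D) * (c0⁻¹ * (Real.exp (birk φ k (ext u x'))
            * Real.exp (birk φ m x'))) := by
      field_simp
    linarith
  calc μ (cyl x m) * ENNReal.ofReal (Real.exp (birk φ k (ext u x)))
      ≤ ENNReal.ofReal (c0 * Real.exp (birk φ m x'))
        * ENNReal.ofReal (Real.exp (birk φ k (ext u x))) := mul_le_mul_left hup _
    _ = ENNReal.ofReal (c0 * Real.exp (birk φ m x') * Real.exp (birk φ k (ext u x))) :=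
        (ENNReal.ofReal_mul (by positivity)).symm
    _ ≤ ENNReal.ofReal ((c0^2 * Real.exp D) * (c0⁻¹ * Real.exp (birk φ (m + k) (ext u x')))) :=
        ENNReal.ofReal_le_ofReal hreal
    _ = ENNReal.ofReal (c0^2 * Real.exp D)
        * ENNReal.ofReal (c0⁻¹ * Real.exp (birk φ (m + k) (ext u x'))) :=
        ENNReal.ofReal_mul (by positivity)
    _ ≤ ENNReal.ofReal (c0^2 * Real.exp D) * μ (cyl (ext u x) (m + k)) :=
        mul_le_mul_right hlow _

lemma sum_restrict_partition (μ : Measure (ℕ → Fin l)) (m : ℕ) :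
    (∑ v : Fin m → Fin l, μ.restrict (cyl (ext v (z0 l)) m)) = μ := by
  ext s hs
  rw [Measure.finset_sum_apply]
  simp_rw [Measure.restrict_apply hs]
  have hdisj : (↑(Finset.univ : Finset (Fin m → Fin l)) : Set (Fin m → Fin l)).PairwiseDisjoint
      (fun v => s ∩ cyl (ext v (z0 l)) m) := by
    intro v _ v' _ hvv'
    apply Set.disjoint_left.mpr
    rintro y ⟨_, hy⟩ ⟨_, hy'⟩
    apply hvv'
    funext n
    have h1 := hy n n.isLt
    have h2 := hy' n n.isLt
    rw [ext_apply_lt _ _ n.isLt] at h1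
    rw [ext_apply_lt _ _ n.isLt] at h2
    rw [← h1, ← h2]
  rw [← measure_biUnion_finset hdisj
    (fun v _ => hs.inter (measurableSet_cyl _ _))]
  congr 1
  apply Set.Subset.antisymm
  · intro y hy
    rcases Set.mem_iUnion.mp hy with ⟨v, hv⟩
    simp only [Set.mem_iUnion, exists_prop] at hv
    exact hv.2.1
  · intro y hy
    apply Set.mem_biUnion (Finset.mem_univ (fun i : Fin m => y i))
    refine ⟨hy, ?_⟩
    intro i hi
    rw [ext_apply_lt _ _ hi]

lemma pair_disjoint (k m : ℕ) :
    Pairwise (Function.onFun Disjoint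
      (fun p : (Fin k → Fin l) × (Fin m → Fin l)
        => cyl (ext p.1 (ext p.2 (z0 l))) (m + k))) := by
  intro p q hpq
  apply Set.disjoint_left.mpr
  intro y hy hy'
  apply hpq
  have key : ∀ r : (Fin k → Fin l) × (Fin m → Fin l),
      y ∈ cyl (ext r.1 (ext r.2 (z0 l))) (m + k) →
      (∀ i : Fin k, y i = r.1 i) ∧ (∀ j : Fin m, y (j + k) = r.2 j) := by
    rintro ⟨u, v⟩ hmem
    constructor
    · intro i
      have h1 := hmem i (by omega)
      rwa [ext_apply_lt _ _ i.isLt] at h1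
    · intro j
      have h1 := hmem (j + k) (by omega)
      rw [ext_apply_ge _ _ (by omega), show (j:ℕ) + k - k = j by omega,
        ext_apply_lt _ _ j.isLt] at h1
      exact h1
  obtain ⟨h1, h2⟩ := key p hy
  obtain ⟨h1', h2'⟩ := key q hy'
  ext1
  · funext i
    rw [← h1 i, ← h1' i]
  · funext j
    rw [← h2 j, ← h2' j]

lemma sum_restrict_le {ι : Type*} [Fintype ι] (B : ι → Set (ℕ → Fin l))
    (hdisj : Pairwise (Function.onFun Disjoint B)) (hmeas : ∀ i, MeasurableSet (B i)) :
    (∑ i : ι, μ.restrict (B i)) ≤ μ := by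
  refine Measure.le_iff.mpr (fun s hs => ?_)
  rw [Measure.finset_sum_apply]
  simp_rw [Measure.restrict_apply hs]
  have hdisj' : (↑(Finset.univ : Finset ι) : Set ι).PairwiseDisjoint (fun i => s ∩ B i) := by
    intro i _ j _ hij
    exact Disjoint.mono Set.inter_subset_right Set.inter_subset_right (hdisj hij)
  rw [← measure_biUnion_finset hdisj' (fun i _ => hs.inter (hmeas i))]
  apply measure_mono
  intro y hy
  rcases Set.mem_iUnion.mp hy with ⟨i, hi⟩
  simp only [Set.mem_iUnion, exists_prop] at hi
  exact hi.2.1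

end Chunk8

namespace Chunk9
open LY Chunk2 Chunk3 Chunk4 Chunk5 Chunk6 Chunk7 Chunk8 MeasureTheory

variable {l : ℕ} [Nonempty (Fin l)] {A : Fin l → Fin l → Bool} {θ Kφ c0 : ℝ}
  {φ : (ℕ → Fin l) → ℝ} {μ : Measure (ℕ → Fin l)} [IsProbabilityMeasure μ]

lemma stepB
    (hθ : 0 < θ) (hθ1 : θ < 1)
    (hφ : ∀ x y : ℕ → Fin l, ∀ n : ℕ, (∀ i < n, x i = y i) → |φ x - φ y| ≤ Kφ * θ ^ n)
    (hsupp : μ (Adm A) = 1) (hc0 : 1 < c0)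
    (hGibbs : ∀ x : ℕ → Fin l, (∀ n, A (x n) (x (n + 1)) = true) → ∀ n : ℕ, 1 ≤ n →
      ENNReal.ofReal (c0⁻¹ * Real.exp (birk φ n x)) ≤ μ (cyl x n) ∧
      μ (cyl x n) ≤ ENNReal.ofReal (c0 * Real.exp (birk φ n x)))
    {k m : ℕ} (hm : 1 ≤ m) {w : (ℕ → Fin l) → ℝ} (hw : Measurable w) :
    ∫⁻ x, oscE μ ((transfer A φ)^[k] w) m x ∂μ
      ≤ ENNReal.ofReal (c0^2 * Real.exp (Kφ * (θ / (1 - θ)))^3)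
          * ((1 + ENNReal.ofReal (2 * (Kφ * (θ / (1 - θ)))
                * Real.exp (2 * (Kφ * (θ / (1 - θ)))) * θ ^ m))
              * ∫⁻ x, oscE μ w (m + k) x ∂μ
            + ENNReal.ofReal (2 * (Kφ * (θ / (1 - θ)))
                * Real.exp (2 * (Kφ * (θ / (1 - θ)))) * θ ^ m)
              * ∫⁻ x, ENNReal.ofReal |w x| ∂μ) := by
  classical
  set D := Kφ * (θ / (1 - θ)) with hD
  have hKφ0 := Kφ_nonneg hφ (z0 l)
  have hfrac : 0 ≤ θ / (1 - θ) := div_nonneg hθ.le (by linarith)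
  have hD0 : 0 ≤ D := mul_nonneg hKφ0 hfrac
  set E := Real.exp D with hE
  have hE0 : 0 < E := Real.exp_pos _
  set c : ℝ≥0∞ := ENNReal.ofReal (2 * D * Real.exp (2 * D) * θ ^ m) with hc
  set xv : (Fin m → Fin l) → (ℕ → Fin l) := fun v => ext v (z0 l) with hxv
  set B : (Fin k → Fin l) × (Fin m → Fin l) → Set (ℕ → Fin l) :=
    fun p => cyl (ext p.1 (xv p.2)) (m + k) with hB
  set oscF := fun x => oscE μ ((transfer A φ)^[k] w) m x with hoscF
  -- the per-`v` constant bound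
  set Ψ : (Fin k → Fin l) → (Fin m → Fin l) → ℝ≥0∞ := fun u v =>
    oscE μ w (m + k) (ext u (xv v))
      + c * ((μ (B (u, v)))⁻¹ * ∫⁻ z in B (u, v), ENNReal.ofReal |w z| ∂μ
          + oscE μ w (m + k) (ext u (xv v))) with hΨ
  have hv : ∀ v : Fin m → Fin l, ∫⁻ x, oscF x ∂(μ.restrict (cyl (xv v) m))
      ≤ (∑ u : Fin k → Fin l, if adm A u (xv v) then
          ENNReal.ofReal (E * (E * Real.exp (birk φ k (ext u (xv v))))) * Ψ u v else 0)
        * μ (cyl (xv v) m) := by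
    intro v
    have hbound : ∀ᵐ x ∂(μ.restrict (cyl (xv v) m)), oscF x
        ≤ ∑ u : Fin k → Fin l, if adm A u (xv v) then
            ENNReal.ofReal (E * (E * Real.exp (birk φ k (ext u (xv v))))) * Ψ u v else 0 := by
      filter_upwards [ae_restrict_mem (measurableSet_cyl (xv v) m)] with x hx
      refine le_trans (stepA hθ hθ1 hφ hsupp hc0 hGibbs hm x hw) ?_
      apply Finset.sum_le_sum
      intro u _
      have hadm_iff : adm A u x ↔ adm A u (xv v) := adm_congr A u (hx 0 (by omega))
      by_cases h : adm A u (xv v)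
      · rw [if_pos (hadm_iff.mpr h), if_pos h]
        have hextc : ext u x ∈ cyl (ext u (xv v)) (m + k) := ext_mem_cyl u hx
        have hcyl_eq : cyl (ext u x) (m + k) = cyl (ext u (xv v)) (m + k) :=
          cyl_eq_of_mem hextc
        have hosc_eq : oscE μ w (m + k) (ext u x) = oscE μ w (m + k) (ext u (xv v)) :=
          oscE_congr hextc
        have hbb : |birk φ k (ext u x) - birk φ k (ext u (xv v))| ≤ D := by
          have hmm := birk_abs_sub_le hθ hθ1 hφ (p := ext u x) (q := ext u (xv v))
            (n := m + k) (k := k) (by omega) (fun i hi => hextc i hi)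
          rw [show m + k - k = m by omega, ← hD] at hmm
          have h1 : D * θ ^ m ≤ D * 1 := by
            apply mul_le_mul_of_nonneg_left _ hD0
            exact pow_le_one₀ hθ.le hθ1.le
          linarith
        have hexp : Real.exp (birk φ k (ext u x))
            ≤ E * Real.exp (birk φ k (ext u (xv v))) := by
          rw [hE]
          exact exp_le_exp_mul_of_abs_sub hbb
        have hcoef : ENNReal.ofReal (E * Real.exp (birk φ k (ext u x)))
            ≤ ENNReal.ofReal (E * (E * Real.exp (birk φ k (ext u (xv v))))) := by
          apply ENNReal.ofReal_le_ofReal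
          exact mul_le_mul_of_nonneg_left hexp hE0.le
        rw [hcyl_eq, hosc_eq]
        exact mul_le_mul_left hcoef _
      · rw [if_neg (fun hh => h (hadm_iff.mp hh)), if_neg h]
    calc ∫⁻ x, oscF x ∂(μ.restrict (cyl (xv v) m))
        ≤ ∫⁻ _, (∑ u : Fin k → Fin l, if adm A u (xv v) then
            ENNReal.ofReal (E * (E * Real.exp (birk φ k (ext u (xv v))))) * Ψ u v else 0)
            ∂(μ.restrict (cyl (xv v) m)) := lintegral_mono_ae hbound
      _ = _ := by
          rw [lintegral_const, Measure.restrict_apply_univ]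
  -- per-(u,v) final bound
  have hterm : ∀ (v : Fin m → Fin l) (u : Fin k → Fin l),
      (if adm A u (xv v) then
        ENNReal.ofReal (E * (E * Real.exp (birk φ k (ext u (xv v))))) * Ψ u v else 0)
        * μ (cyl (xv v) m)
      ≤ ENNReal.ofReal (c0^2 * E^3)
          * ((1 + c) * ∫⁻ z in B (u, v), oscE μ w (m + k) z ∂μ
            + c * ∫⁻ z in B (u, v), ENNReal.ofReal |w z| ∂μ) := by
    intro v u
    by_cases h : adm A u (xv v)
    · rw [if_pos h]
      have hswap := cylinder_swap hθ hθ1 hφ hsupp hc0 hGibbs hm u (xv v) h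
      -- ∫ of oscE over B is constant
      have hosc_int : ∫⁻ z in B (u, v), oscE μ w (m + k) z ∂μ
          = oscE μ w (m + k) (ext u (xv v)) * μ (B (u, v)) := by
        have hcongr : ∀ z ∈ B (u, v), oscE μ w (m + k) z = oscE μ w (m + k) (ext u (xv v)) :=
          fun z hz => oscE_congr hz
        rw [setLIntegral_congr_fun (measurableSet_cyl _ _)
          hcongr, setLIntegral_const]
      have hmulinv : μ (B (u, v)) * ((μ (B (u, v)))⁻¹
          * ∫⁻ z in B (u, v), ENNReal.ofReal |w z| ∂μ)
          ≤ ∫⁻ z in B (u, v), ENNReal.ofReal |w z| ∂μ := by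
        rw [← mul_assoc]
        apply mul_le_of_le_one_left' 
        exact ENNReal.mul_inv_le_one _
      have hPsi : μ (B (u, v)) * Ψ u v
          ≤ (1 + c) * ∫⁻ z in B (u, v), oscE μ w (m + k) z ∂μ
            + c * ∫⁻ z in B (u, v), ENNReal.ofReal |w z| ∂μ := by
        simp only [hΨ]
        rw [mul_add]
        have h1 : μ (B (u, v)) * oscE μ w (m + k) (ext u (xv v))
            = ∫⁻ z in B (u, v), oscE μ w (m + k) z ∂μ := by rw [hosc_int, mul_comm]
        have h2 : μ (B (u, v)) * (c * ((μ (B (u, v)))⁻¹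
              * ∫⁻ z in B (u, v), ENNReal.ofReal |w z| ∂μ
              + oscE μ w (m + k) (ext u (xv v))))
            ≤ c * ∫⁻ z in B (u, v), ENNReal.ofReal |w z| ∂μ
              + c * ∫⁻ z in B (u, v), oscE μ w (m + k) z ∂μ := by
          have hre : μ (B (u, v)) * (c * ((μ (B (u, v)))⁻¹
              * ∫⁻ z in B (u, v), ENNReal.ofReal |w z| ∂μ
              + oscE μ w (m + k) (ext u (xv v))))
              = c * (μ (B (u, v)) * ((μ (B (u, v)))⁻¹
                  * ∫⁻ z in B (u, v), ENNReal.ofReal |w z| ∂μ))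
                + c * (μ (B (u, v)) * oscE μ w (m + k) (ext u (xv v))) := by ring
          rw [hre]
          apply add_le_add
          · exact mul_le_mul_right hmulinv c
          · exact mul_le_mul_right (le_of_eq h1) c
        calc μ (B (u, v)) * oscE μ w (m + k) (ext u (xv v))
              + μ (B (u, v)) * (c * ((μ (B (u, v)))⁻¹
                  * ∫⁻ z in B (u, v), ENNReal.ofReal |w z| ∂μ
                  + oscE μ w (m + k) (ext u (xv v))))
            ≤ ∫⁻ z in B (u, v), oscE μ w (m + k) z ∂μ
              + (c * ∫⁻ z in B (u, v), ENNReal.ofReal |w z| ∂μ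
                + c * ∫⁻ z in B (u, v), oscE μ w (m + k) z ∂μ) := by
              rw [h1]
              exact add_le_add_right h2 _
          _ = (1 + c) * ∫⁻ z in B (u, v), oscE μ w (m + k) z ∂μ
              + c * ∫⁻ z in B (u, v), ENNReal.ofReal |w z| ∂μ := by ring
      calc ENNReal.ofReal (E * (E * Real.exp (birk φ k (ext u (xv v))))) * Ψ u v
            * μ (cyl (xv v) m)
          = (ENNReal.ofReal (E * E) * Ψ u v)
            * (μ (cyl (xv v) m) * ENNReal.ofReal (Real.exp (birk φ k (ext u (xv v))))) := by
            rw [show E * (E * Real.exp (birk φ k (ext u (xv v))))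
              = (E * E) * Real.exp (birk φ k (ext u (xv v))) by ring]
            rw [ENNReal.ofReal_mul (by positivity)]
            ring
        _ ≤ (ENNReal.ofReal (E * E) * Ψ u v)
            * (ENNReal.ofReal (c0^2 * E) * μ (B (u, v))) := by
            apply mul_le_mul_right
            exact hswap
        _ = ENNReal.ofReal (c0^2 * E^3) * (μ (B (u, v)) * Ψ u v) := by
            have hof : ENNReal.ofReal (E * E) * ENNReal.ofReal (c0^2 * E)
                = ENNReal.ofReal (c0^2 * E^3) := by
              rw [← ENNReal.ofReal_mul (by positivity)]
              congr 1
              ring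
            calc (ENNReal.ofReal (E * E) * Ψ u v)
                  * (ENNReal.ofReal (c0^2 * E) * μ (B (u, v)))
                = (ENNReal.ofReal (E * E) * ENNReal.ofReal (c0^2 * E))
                  * (μ (B (u, v)) * Ψ u v) := by ring
              _ = ENNReal.ofReal (c0^2 * E^3) * (μ (B (u, v)) * Ψ u v) := by rw [hof]
        _ ≤ ENNReal.ofReal (c0^2 * E^3)
            * ((1 + c) * ∫⁻ z in B (u, v), oscE μ w (m + k) z ∂μ
              + c * ∫⁻ z in B (u, v), ENNReal.ofReal |w z| ∂μ) := mul_le_mul_right hPsi _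
    · rw [if_neg h, zero_mul]
      exact zero_le
  -- sums over disjoint cylinders
  have hsum : ∀ f : (ℕ → Fin l) → ℝ≥0∞,
      (∑ p : (Fin k → Fin l) × (Fin m → Fin l), ∫⁻ z in B p, f z ∂μ) ≤ ∫⁻ z, f z ∂μ := by
    intro f
    rw [← lintegral_finset_sum_measure]
    exact lintegral_mono' (sum_restrict_le B (pair_disjoint k m)
      (fun p => measurableSet_cyl _ _)) le_rfl
  -- put everything together
  calc ∫⁻ x, oscF x ∂μ
      = ∑ v : Fin m → Fin l, ∫⁻ x, oscF x ∂(μ.restrict (cyl (xv v) m)) := by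
        conv_lhs => rw [← sum_restrict_partition μ m]
        rw [lintegral_finset_sum_measure]
    _ ≤ ∑ v : Fin m → Fin l, (∑ u : Fin k → Fin l, if adm A u (xv v) then
          ENNReal.ofReal (E * (E * Real.exp (birk φ k (ext u (xv v))))) * Ψ u v else 0)
          * μ (cyl (xv v) m) := Finset.sum_le_sum (fun v _ => hv v)
    _ = ∑ v : Fin m → Fin l, ∑ u : Fin k → Fin l, (if adm A u (xv v) then
          ENNReal.ofReal (E * (E * Real.exp (birk φ k (ext u (xv v))))) * Ψ u v else 0)
          * μ (cyl (xv v) m) := by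
        apply Finset.sum_congr rfl
        intro v _
        rw [Finset.sum_mul]
    _ ≤ ∑ v : Fin m → Fin l, ∑ u : Fin k → Fin l, ENNReal.ofReal (c0^2 * E^3)
          * ((1 + c) * ∫⁻ z in B (u, v), oscE μ w (m + k) z ∂μ
            + c * ∫⁻ z in B (u, v), ENNReal.ofReal |w z| ∂μ) :=
        Finset.sum_le_sum (fun v _ => Finset.sum_le_sum (fun u _ => hterm v u))
    _ = ENNReal.ofReal (c0^2 * E^3)
          * ((1 + c) * ∑ p : (Fin k → Fin l) × (Fin m → Fin l),
              ∫⁻ z in B p, oscE μ w (m + k) z ∂μ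
            + c * ∑ p : (Fin k → Fin l) × (Fin m → Fin l),
              ∫⁻ z in B p, ENNReal.ofReal |w z| ∂μ) := by
        rw [Finset.sum_comm]
        rw [← Fintype.sum_prod_type (f := fun p : (Fin k → Fin l) × (Fin m → Fin l) =>
          ENNReal.ofReal (c0^2 * E^3)
          * ((1 + c) * ∫⁻ z in B p, oscE μ w (m + k) z ∂μ
            + c * ∫⁻ z in B p, ENNReal.ofReal |w z| ∂μ))]
        rw [← Finset.mul_sum, Finset.sum_add_distrib, ← Finset.mul_sum, ← Finset.mul_sum]
    _ ≤ ENNReal.ofReal (c0^2 * E^3)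
          * ((1 + c) * ∫⁻ x, oscE μ w (m + k) x ∂μ
            + c * ∫⁻ x, ENNReal.ofReal |w x| ∂μ) := by
        apply mul_le_mul_right
        apply add_le_add
        · exact mul_le_mul_right (hsum _) _
        · exact mul_le_mul_right (hsum _) _

end Chunk9


open LY Chunk2 Chunk3 Chunk4 Chunk5 Chunk6 Chunk7 Chunk8 Chunk9 in
/-- Lasota–Yorke inequality: for the normalized transfer operator `L`
(`L1 = 1`) of a Hölder potential on a mixing SFT with Gibbs measure `μ`, there is
`c > 0` with `|L^k w|_θ ≤ c (θ^k |w|_θ + ‖w‖_{L¹(μ)})` for all `k ≥ 1`, `w ∈ B_θ`. -/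
theorem lasota_yorke {l : ℕ} (A : Fin l → Fin l → Bool)
    (θ : ℝ) (hθ : 0 < θ) (hθ1 : θ < 1)
    (φ : (ℕ → Fin l) → ℝ) (Kφ : ℝ)
    (hφ : ∀ x y : ℕ → Fin l, ∀ n : ℕ, (∀ i < n, x i = y i) → |φ x - φ y| ≤ Kφ * θ ^ n)
    (μ : Measure (ℕ → Fin l)) [IsProbabilityMeasure μ]
    (hsupp : μ {x | ∀ n, A (x n) (x (n + 1)) = true} = 1)
    (hnorm : ∀ x, transfer A φ (fun _ => 1) x = 1)
    (c0 : ℝ) (hc0 : 1 < c0)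
    (hGibbs : ∀ x : ℕ → Fin l, (∀ n, A (x n) (x (n + 1)) = true) → ∀ n : ℕ, 1 ≤ n →
      ENNReal.ofReal (c0⁻¹ * Real.exp (birk φ n x)) ≤ μ (cyl x n) ∧
      μ (cyl x n) ≤ ENNReal.ofReal (c0 * Real.exp (birk φ n x))) :
    ∃ c : ℝ, 0 < c ∧ ∀ k : ℕ, 1 ≤ k → ∀ w : (ℕ → Fin l) → ℝ, Measurable w →
      thetaSemi μ θ ((transfer A φ)^[k] w) ≤
        ENNReal.ofReal c * (ENNReal.ofReal θ ^ k * thetaSemi μ θ w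
          + ∫⁻ x, ENNReal.ofReal |w x| ∂μ) := by
  classical
  have hne : Nonempty (Fin l) := by
    by_contra h
    have huniv : (Set.univ : Set (ℕ → Fin l)) = ∅ := by
      ext x
      exact absurd ⟨x 0⟩ h
    have h1 : μ Set.univ = 1 := measure_univ
    rw [huniv] at h1
    simp at h1
  have hKφ0 : 0 ≤ Kφ := Chunk3.Kφ_nonneg hφ (Chunk4.z0 l)
  set D := Kφ * (θ / (1 - θ)) with hD
  have hfrac : 0 ≤ θ / (1 - θ) := div_nonneg hθ.le (by linarith)
  have hD0 : 0 ≤ D := mul_nonneg hKφ0 hfrac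
  set E := Real.exp D with hE
  have hE0 : 0 < E := Real.exp_pos _
  have hc0' : (0:ℝ) < c0 := by linarith
  set cf : ℝ := c0^2 * E^3 * (1 + 2 * D * Real.exp (2 * D)) with hcf
  have hcf0 : 0 < cf := by
    have h2 : (0:ℝ) < 1 + 2 * D * Real.exp (2 * D) := by positivity
    positivity
  refine ⟨cf, hcf0, ?_⟩
  intro k hk w hw
  have hsupp' : μ (Chunk5.Adm A) = 1 := hsupp
  set a := ENNReal.ofReal θ with ha
  have ha0 : a ≠ 0 := by
    rw [ha, Ne, ENNReal.ofReal_eq_zero]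
    linarith
  have hat : a ≠ ⊤ := ENNReal.ofReal_ne_top
  have ha1 : a ≤ 1 := by
    rw [ha]
    exact ENNReal.ofReal_le_one.mpr hθ1.le
  apply iSup_le
  intro m
  apply iSup_le
  intro hm
  have hB := Chunk9.stepB hθ hθ1 hφ hsupp' hc0 hGibbs hm hw (k := k)
  set I1 := ∫⁻ x, oscE μ w (m + k) x ∂μ with hI1
  set I2 := ∫⁻ x, ENNReal.ofReal |w x| ∂μ with hI2
  set Q := ENNReal.ofReal (2 * D * Real.exp (2 * D)) with hQ
  set R := ENNReal.ofReal (c0^2 * E^3) with hR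
  -- rewrite the c_m coefficient
  have hcm : ENNReal.ofReal (2 * D * Real.exp (2 * D) * θ ^ m) = Q * a ^ m := by
    rw [hQ, ha, ← ENNReal.ofReal_pow hθ.le, ← ENNReal.ofReal_mul (by positivity)]
  have hP : (1 : ℝ≥0∞) + Q * a ^ m ≤ ENNReal.ofReal (1 + 2 * D * Real.exp (2 * D)) := by
    rw [ENNReal.ofReal_add (by norm_num) (by positivity), ENNReal.ofReal_one]
    apply add_le_add_right
    calc Q * a ^ m ≤ Q * 1 := by
          apply mul_le_mul_right
          exact pow_le_one' ha1 m
      _ = Q := mul_one Q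
  have hapow0 : ∀ j : ℕ, a ^ j ≠ 0 := fun j => pow_ne_zero j ha0
  have hapowt : ∀ j : ℕ, a ^ j ≠ ⊤ := fun j => ENNReal.pow_ne_top hat
  have hsemi : (a ^ (m + k))⁻¹ * I1 ≤ thetaSemi μ θ w := by
    refine le_trans ?_ (le_iSup (fun m' => ⨆ _ : 1 ≤ m',
      (ENNReal.ofReal θ ^ m')⁻¹ * ∫⁻ x, oscE μ w m' x ∂μ) (m + k))
    exact le_iSup (fun _ : 1 ≤ m + k =>
      (ENNReal.ofReal θ ^ (m + k))⁻¹ * ∫⁻ x, oscE μ w (m + k) x ∂μ) (by omega)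
  have hinvsplit : (a ^ m)⁻¹ = a ^ k * (a ^ (m + k))⁻¹ := by
    rw [pow_add, ENNReal.mul_inv (Or.inl (hapow0 m)) (Or.inl (hapowt m))]
    rw [← mul_assoc, mul_comm (a ^ k) ((a ^ m)⁻¹), mul_assoc,
      ENNReal.mul_inv_cancel (hapow0 k) (hapowt k), mul_one]
  calc (ENNReal.ofReal θ ^ m)⁻¹ * ∫⁻ x, oscE μ ((transfer A φ)^[k] w) m x ∂μ
      ≤ (a ^ m)⁻¹ * (R * ((1 + Q * a ^ m) * I1 + Q * a ^ m * I2)) := by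
        rw [← hD] at hB
        rw [hcm] at hB
        rw [← ha]
        exact mul_le_mul_right hB _
    _ = R * ((1 + Q * a ^ m) * ((a ^ m)⁻¹ * I1))
        + R * Q * (a ^ m * (a ^ m)⁻¹) * I2 := by ring
    _ ≤ R * (ENNReal.ofReal (1 + 2 * D * Real.exp (2 * D)) * ((a ^ m)⁻¹ * I1))
        + R * Q * 1 * I2 := by
        apply add_le_add
        · apply mul_le_mul_right
          exact mul_le_mul_left hP _
        · apply mul_le_mul_left
          apply mul_le_mul_right
          rw [ENNReal.mul_inv_cancel (hapow0 m) (hapowt m)]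
    _ = (R * ENNReal.ofReal (1 + 2 * D * Real.exp (2 * D))) * ((a ^ m)⁻¹ * I1)
        + (R * Q) * I2 := by ring
    _ ≤ ENNReal.ofReal cf * ((a ^ m)⁻¹ * I1) + ENNReal.ofReal cf * I2 := by
        apply add_le_add
        · apply mul_le_mul_left
          rw [hR, ← ENNReal.ofReal_mul (by positivity), hcf]
        · apply mul_le_mul_left
          rw [hR, hQ, ← ENNReal.ofReal_mul (by positivity), hcf]
          apply ENNReal.ofReal_le_ofReal
          nlinarith [sq_nonneg c0, Real.exp_pos (2*D), pow_pos hE0 3, sq_nonneg (c0*E)]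
    _ = ENNReal.ofReal cf * (a ^ k * ((a ^ (m + k))⁻¹ * I1)) + ENNReal.ofReal cf * I2 := by
        rw [hinvsplit]
        ring
    _ ≤ ENNReal.ofReal cf * (a ^ k * thetaSemi μ θ w) + ENNReal.ofReal cf * I2 := by
        apply add_le_add_left
        apply mul_le_mul_right
        exact mul_le_mul_right hsemi _
    _ = ENNReal.ofReal cf * (ENNReal.ofReal θ ^ k * thetaSemi μ θ w + I2) := by
        rw [← ha, mul_add]

end
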